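/- arXiv:0903.3259 — 6 statements merged into one kernel-verified Lean document; each statement's English description precedes it below -/
import Mathlib

section
/- Let G be the cumulative distribution function of a positive random variable ζ, and for y ≥ 0 with G(y) < 1 let G_y(x) = (G(x+y) − G(y))/(1 − G(y)). Suppose G belongs to the class NBU or to the class NWU, and suppose sup over x ≥ 0 and y ≥ 0 (with G(y) < 1) of |G(x) − G_y(x)| < ε for some ε > 0. Then sup over x ≥ 0 and y₁, y₂ ≥ 0 (with G(y₁) < 1 and G(y₂) < 1) of |G_{y₁}(x) − G_{y₂}(x)| < ε. -/
open Filter Set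

/-- Residual-life distribution function: `G_y(x) = (G(x+y) - G(y)) / (1 - G(y))`. -/
noncomputable def resid (G : ℝ → ℝ) (y x : ℝ) : ℝ := (G (x + y) - G y) / (1 - G y)

/-- If `G` is NBU or NWU and `sup_{x ≥ 0, y ≥ 0, G(y) < 1} |G(x) - G_y(x)| < ε`, then
`sup_{x ≥ 0, y₁, y₂ ≥ 0, G(y₁) < 1, G(y₂) < 1} |G_{y₁}(x) - G_{y₂}(x)| < ε`. -/
theorem residual_sup_eps_of_NBU_or_NWU
    (G : ℝ → ℝ) (hMono : Monotone G)
    (hZero : ∀ x ≤ (0:ℝ), G x = 0)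
    (hRC : ∀ x : ℝ, ContinuousWithinAt G (Set.Ici x) x)
    (hTop : Tendsto G atTop (nhds 1))
    (hAging : (∀ x ≥ (0:ℝ), ∀ y ≥ (0:ℝ), 1 - G (x + y) ≤ (1 - G x) * (1 - G y)) ∨
      (∀ x ≥ (0:ℝ), ∀ y ≥ (0:ℝ), (1 - G x) * (1 - G y) ≤ 1 - G (x + y)))
    (ε : ℝ) (hε : 0 < ε)
    (hSup : sSup {v : ℝ | ∃ x ≥ (0:ℝ), ∃ y ≥ (0:ℝ), G y < 1 ∧ v = |G x - resid G y x|} < ε) :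
    sSup {v : ℝ | ∃ x ≥ (0:ℝ), ∃ y₁ ≥ (0:ℝ), ∃ y₂ ≥ (0:ℝ), G y₁ < 1 ∧ G y₂ < 1 ∧
      v = |resid G y₁ x - resid G y₂ x|} < ε := by
  set S1 := {v : ℝ | ∃ x ≥ (0:ℝ), ∃ y ≥ (0:ℝ), G y < 1 ∧ v = |G x - resid G y x|} with hS1def
  have hG1 : ∀ x, G x ≤ 1 := fun x =>
    ge_of_tendsto hTop (eventually_atTop.2 ⟨x, fun c hc => hMono hc⟩)
  have hG0 : G 0 = 0 := hZero 0 le_rfl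
  have hGnn : ∀ x ≥ (0:ℝ), 0 ≤ G x := fun x hx => hG0 ▸ hMono hx
  have hresid_mem : ∀ x ≥ (0:ℝ), ∀ y ≥ (0:ℝ), G y < 1 → 0 ≤ resid G y x ∧ resid G y x ≤ 1 := by
    intro x hx y hy hylt
    have hd : 0 < 1 - G y := by linarith
    constructor
    · apply div_nonneg _ hd.le
      have : G y ≤ G (x + y) := hMono (by linarith)
      linarith
    · rw [resid, div_le_one hd]
      have := hG1 (x + y); linarith
  have hbdd : BddAbove S1 := by
    refine ⟨2, ?_⟩
    rintro v ⟨x, hx, y, hy, hylt, rfl⟩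
    have h1 := hresid_mem x hx y hy hylt
    have h2 := hG1 x
    have h3 := hGnn x hx
    rw [abs_le]; constructor <;> linarith [h1.1, h1.2]
  have hmemS1 : ∀ x ≥ (0:ℝ), ∀ y ≥ (0:ℝ), G y < 1 → |G x - resid G y x| ≤ sSup S1 := by
    intro x hx y hy hylt
    exact le_csSup hbdd ⟨x, hx, y, hy, hylt, rfl⟩
  have hsign : (∀ x ≥ (0:ℝ), ∀ y ≥ (0:ℝ), G y < 1 → G x ≤ resid G y x) ∨
               (∀ x ≥ (0:ℝ), ∀ y ≥ (0:ℝ), G y < 1 → resid G y x ≤ G x) := by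
    rcases hAging with h | h
    · left; intro x hx y hy hylt
      have hd : 0 < 1 - G y := by linarith
      rw [resid, le_div_iff₀ hd]
      have := h x hx y hy
      nlinarith
    · right; intro x hx y hy hylt
      have hd : 0 < 1 - G y := by linarith
      rw [resid, div_le_iff₀ hd]
      have := h x hx y hy
      nlinarith
  refine lt_of_le_of_lt (csSup_le ?_ ?_) hSup
  · refine ⟨0, 0, le_rfl, 0, le_rfl, 0, le_rfl, by rw [hG0]; norm_num, by rw [hG0]; norm_num, by simp⟩
  · rintro v ⟨x, hx, y1, hy1, y2, hy2, h1, h2, rfl⟩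
    have b1 := hmemS1 x hx y1 hy1 h1
    have b2 := hmemS1 x hx y2 hy2 h2
    have c1 : resid G y1 x - G x ≤ sSup S1 := by
      refine le_trans ?_ b1
      rw [abs_sub_comm]; exact le_abs_self _
    have c1' : G x - resid G y1 x ≤ sSup S1 := le_trans (le_abs_self _) b1
    have c2 : resid G y2 x - G x ≤ sSup S1 := by
      refine le_trans ?_ b2
      rw [abs_sub_comm]; exact le_abs_self _
    have c2' : G x - resid G y2 x ≤ sSup S1 := le_trans (le_abs_self _) b2
    rcases hsign with hs | hs
    · have a1 := hs x hx y1 hy1 h1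
      have a2 := hs x hx y2 hy2 h2
      rw [abs_le]; constructor <;> linarith
    · have a1 := hs x hx y1 hy1 h1
      have a2 := hs x hx y2 hy2 h2
      rw [abs_le]; constructor <;> linarith
end

section
/- Let G be the cumulative distribution function of a positive random variable ζ with finite mean 1/λ = ∫₀^∞ x dG(x), and for y ≥ 0 with G(y) < 1 let G_y(x) = (G(x+y) − G(y))/(1 − G(y)). If sup over x ≥ 0 and y ≥ 0 (with G(y) < 1) of |G(x) − G_y(x)| < ε for some ε > 0, then sup over x ≥ 0 of |G(x) − (1 − e^{−λx})| < 2ε. -/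
open MeasureTheory Set

lemma av_exp_integral (lam : ℝ) (hlam : 0 < lam) (a b : ℝ) :
    ∫ t in a..b, Real.exp (lam * t) = (Real.exp (lam * b) - Real.exp (lam * a)) / lam := by
  have h : ∀ t ∈ Set.uIcc a b,
      HasDerivAt (fun u => Real.exp (lam * u) / lam) (Real.exp (lam * t)) t := by
    intro t _
    have h1 : HasDerivAt (fun u : ℝ => lam * u) lam t := by
      simpa using (hasDerivAt_id t).const_mul lam
    have h2 := (Real.hasDerivAt_exp (lam * t)).comp t h1
    have h3 := h2.div_const lam
    simpa [mul_div_assoc, mul_div_cancel_right₀, hlam.ne'] using h3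
  rw [intervalIntegral.integral_eq_sub_of_hasDerivAt h
    ((Real.continuous_exp.comp (continuous_const.mul continuous_id)).intervalIntegrable a b)]
  ring

lemma av_key (F : ℝ → ℝ) (lam s : ℝ) (hlam : 0 < lam) (hs : 0 ≤ s)
    (hFm : Measurable F) (hF0 : ∀ t, 0 ≤ F t) (hF1 : ∀ t, F t ≤ 1)
    (hrc : ∀ x, ContinuousWithinAt F (Ioi x) x)
    (hFint : IntegrableOn F (Ioi 0))
    (hR0 : ∫ t in Ioi 0, F t = 1 / lam)
    (hpt : ∀ x, 0 ≤ x → |F x - lam * ∫ t in Ioi x, F t| ≤ s)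
    (X : ℝ) (hX : 0 ≤ X) :
    |F X - Real.exp (-lam * X)| ≤ s * (2 - Real.exp (-lam * X)) := by
  -- interval integrability of F everywhere
  have hIntAll : ∀ a b : ℝ, IntervalIntegrable F volume a b := by
    intro a b
    rw [intervalIntegrable_iff]
    haveI : IsFiniteMeasure (volume.restrict (Set.uIoc a b)) := by
      constructor
      simp only [Measure.restrict_apply_univ, Set.uIoc]
      exact measure_Ioc_lt_top
    refine Integrable.mono' (integrable_const 1) hFm.aestronglyMeasurable ?_
    refine Filter.Eventually.of_forall fun t => ?_
    rw [Real.norm_eq_abs, abs_of_nonneg (hF0 t)]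
    exact hF1 t
  set P : ℝ → ℝ := fun u => ∫ t in (0:ℝ)..u, F t with hPdef
  have hPcont : Continuous P := intervalIntegral.continuous_primitive hIntAll 0
  have hRP : ∀ u, 0 ≤ u → ∫ t in Ioi u, F t = 1 / lam - P u := by
    intro u hu
    have hd : Disjoint (Ioc 0 u) (Ioi u) := by
      simp [Set.disjoint_left]
    have hsplit : ∫ t in Ioi 0, F t = (∫ t in Ioc 0 u, F t) + ∫ t in Ioi u, F t := by
      rw [← setIntegral_union hd measurableSet_Ioi
        ((hFint.mono_set (Ioc_subset_Ioi_self)))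
        (hFint.mono_set (Ioi_subset_Ioi hu)), Ioc_union_Ioi_eq_Ioi hu]
    have hPu : P u = ∫ t in Ioc 0 u, F t := intervalIntegral.integral_of_le hu
    rw [hR0] at hsplit
    rw [hPu]; linarith
  have hPder : ∀ x : ℝ, HasDerivWithinAt P (F x) (Ici x) x := fun x =>
    intervalIntegral.integral_hasDerivWithinAt_right (hIntAll 0 x)
      (hFm.stronglyMeasurable.stronglyMeasurableAtFilter)
      (hrc x)
  set h : ℝ → ℝ := fun t => Real.exp (lam * t) * (F t - (1 - lam * P t)) with hhdef
  have hg_cont : Continuous fun t => (1 : ℝ) - lam * P t :=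
    continuous_const.sub (continuous_const.mul hPcont)
  have hhint : ∀ a b : ℝ, IntervalIntegrable h volume a b := by
    intro a b
    have h1 : IntervalIntegrable (fun t => F t - (1 - lam * P t)) volume a b :=
      (hIntAll a b).sub (hg_cont.intervalIntegrable a b)
    exact h1.continuousOn_mul (Real.continuous_exp.comp
      (continuous_const.mul continuous_id)).continuousOn
  set A : ℝ → ℝ := fun u => Real.exp (lam * u) * (1 / lam - P u) with hAdef
  set B : ℝ → ℝ := fun u => 1 / lam - ∫ t in (0:ℝ)..u, h t with hBdef
  set d : ℝ → ℝ := fun x => Real.exp (lam * x) * lam * (1 / lam - P x)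
      - Real.exp (lam * x) * F x with hddef
  have hAder : ∀ x ∈ Ico 0 X, HasDerivWithinAt A (d x) (Ici x) x := by
    intro x _
    have he : HasDerivAt (fun u => Real.exp (lam * u)) (Real.exp (lam * x) * lam) x := by
      have h1 : HasDerivAt (fun u : ℝ => lam * u) lam x := by
        simpa using (hasDerivAt_id x).const_mul lam
      exact (Real.hasDerivAt_exp (lam * x)).comp x h1
    have h2 : HasDerivWithinAt (fun u => 1 / lam - P u) (0 - F x) (Ici x) x :=
      (hasDerivWithinAt_const x (Ici x) (1/lam)).sub (hPder x)
    have := (he.hasDerivWithinAt).mul h2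
    refine HasDerivWithinAt.congr_deriv this ?_
    simp [hddef]; ring
  have hBder : ∀ x ∈ Ico 0 X, HasDerivWithinAt B (d x) (Ici x) x := by
    intro x _
    have hprim : HasDerivWithinAt (fun u => ∫ t in (0:ℝ)..u, h t) (h x) (Ici x) x := by
      apply intervalIntegral.integral_hasDerivWithinAt_right (hhint 0 x)
      · have hhm : Measurable h :=
          ((Real.continuous_exp.comp (continuous_const.mul continuous_id)).measurable).mul
            (hFm.sub hg_cont.measurable)
        exact hhm.stronglyMeasurable.stronglyMeasurableAtFilter
      · refine ContinuousWithinAt.mul ?_ ?_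
        · exact (Real.continuous_exp.comp (continuous_const.mul continuous_id)).continuousWithinAt
        · exact (hrc x).sub (hg_cont.continuousWithinAt)
    have := (hasDerivWithinAt_const x (Ici x) (1/lam)).sub hprim
    refine HasDerivWithinAt.congr_deriv this ?_
    simp only [hddef, hhdef]
    field_simp
    ring
  have hAcont : ContinuousOn A (Icc 0 X) :=
    ((Real.continuous_exp.comp (continuous_const.mul continuous_id)).mul
      (continuous_const.sub hPcont)).continuousOn
  have hBcont : ContinuousOn B (Icc 0 X) :=
    (continuous_const.sub (intervalIntegral.continuous_primitive hhint 0)).continuousOn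
  have hA0B0 : A 0 = B 0 := by
    simp [hAdef, hBdef, hPdef]
  have hAB := eq_of_has_deriv_right_eq hAder hBder hAcont hBcont hA0B0 X
    (right_mem_Icc.mpr hX)
  have hABX : Real.exp (lam * X) * (1 / lam - P X) - 1 / lam = -(∫ t in (0:ℝ)..X, h t) := by
    simp only [hAdef, hBdef] at hAB
    linarith
  have h2 : ∫ t in (0:ℝ)..X, |h t| ≤ ∫ t in (0:ℝ)..X, s * Real.exp (lam * t) := by
    apply intervalIntegral.integral_mono_on hX ((hhint 0 X).abs)
      ((continuous_const.mul (Real.continuous_exp.comp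
        (continuous_const.mul continuous_id))).intervalIntegrable 0 X)
    intro t ht
    have ht0 : 0 ≤ t := ht.1
    have hb := hpt t ht0
    rw [hRP t ht0] at hb
    have hb' : |F t - (1 - lam * P t)| ≤ s := by
      have e : F t - (1 - lam * P t) = F t - lam * (1 / lam - P t) := by
        field_simp
      rw [e]; exact hb
    calc |h t| = Real.exp (lam * t) * |F t - (1 - lam * P t)| := by
          rw [hhdef]; rw [abs_mul, abs_of_pos (Real.exp_pos _)]
    _ ≤ Real.exp (lam * t) * s := mul_le_mul_of_nonneg_left hb' (Real.exp_pos _).le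
    _ = s * Real.exp (lam * t) := mul_comm _ _
  have h3 : ∫ t in (0:ℝ)..X, s * Real.exp (lam * t)
      = s * ((Real.exp (lam * X) - 1) / lam) := by
    rw [intervalIntegral.integral_const_mul, av_exp_integral lam hlam]
    simp
  have hbound : |Real.exp (lam * X) * (1 / lam - P X) - 1 / lam|
      ≤ s * ((Real.exp (lam * X) - 1) / lam) := by
    rw [hABX, abs_neg]
    calc |∫ t in (0:ℝ)..X, h t| ≤ ∫ t in (0:ℝ)..X, |h t| :=
          intervalIntegral.abs_integral_le_integral_abs hX
    _ ≤ s * ((Real.exp (lam * X) - 1) / lam) := by rw [← h3]; exact h2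
  have key2 : |lam * (1 / lam - P X) - Real.exp (-lam * X)|
      ≤ s * (1 - Real.exp (-lam * X)) := by
    have e1 : lam * (1 / lam - P X) - Real.exp (-lam * X)
        = (lam * Real.exp (-lam * X)) * (Real.exp (lam * X) * (1 / lam - P X) - 1 / lam) := by
      rw [neg_mul, Real.exp_neg]
      field_simp
    calc |lam * (1 / lam - P X) - Real.exp (-lam * X)|
        = (lam * Real.exp (-lam * X)) * |Real.exp (lam * X) * (1 / lam - P X) - 1 / lam| := by
          rw [e1, abs_mul, abs_of_pos (by positivity)]
    _ ≤ (lam * Real.exp (-lam * X)) * (s * ((Real.exp (lam * X) - 1) / lam)) :=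
          mul_le_mul_of_nonneg_left hbound (by positivity)
    _ = s * (1 - Real.exp (-lam * X)) := by
          rw [neg_mul, Real.exp_neg]
          field_simp
  have hFX := hpt X hX
  rw [hRP X hX] at hFX
  calc |F X - Real.exp (-lam * X)|
      ≤ |F X - lam * (1 / lam - P X)| + |lam * (1 / lam - P X) - Real.exp (-lam * X)| :=
        abs_sub_le _ _ _
  _ ≤ s + s * (1 - Real.exp (-lam * X)) := add_le_add hFX key2
  _ = s * (2 - Real.exp (-lam * X)) := by ring

/-- Azlarov–Volodin characterization bound: if the CDF `G` of a positive random variable with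
mean `1/λ` satisfies `sup_{x ≥ 0, y ≥ 0, G(y) < 1} |G(x) - G_y(x)| < ε`, then
`sup_{x ≥ 0} |G(x) - (1 - e^{-λx})| < 2ε`. -/
theorem azlarov_volodin_bound
    (μ : Measure ℝ) [IsProbabilityMeasure μ] (hPos : μ (Set.Iic 0) = 0)
    (G : ℝ → ℝ) (hG : ∀ x, G x = (μ (Set.Iic x)).toReal)
    (lam : ℝ) (hlam : 0 < lam)
    (hInt : Integrable (fun x : ℝ => x) μ)
    (hMean : ∫ x, x ∂μ = 1 / lam)
    (ε : ℝ) (hε : 0 < ε)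
    (hSup : sSup {v : ℝ | ∃ x ≥ (0:ℝ), ∃ y ≥ (0:ℝ), G y < 1 ∧ v = |G x - resid G y x|} < ε) :
    sSup {v : ℝ | ∃ x ≥ (0:ℝ), v = |G x - (1 - Real.exp (-lam * x))|} < 2 * ε := by
  classical
  set S := {v : ℝ | ∃ x ≥ (0:ℝ), ∃ y ≥ (0:ℝ), G y < 1 ∧ v = |G x - resid G y x|} with hSdef
  set s := sSup S with hsdef
  set F : ℝ → ℝ := fun t => (μ (Set.Ioi t)).toReal with hFdef
  have hfin : ∀ A : Set ℝ, μ A ≠ ⊤ := fun A => (measure_lt_top μ A).ne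
  have hGF : ∀ t, G t + F t = 1 := by
    intro t
    rw [hG, hFdef]
    have h1 : μ (Iic t) + μ (Ioi t) = 1 := by
      rw [← measure_union (Iic_disjoint_Ioi le_rfl) measurableSet_Ioi, Iic_union_Ioi,
        measure_univ]
    calc (μ (Iic t)).toReal + (μ (Ioi t)).toReal = ((μ (Iic t)) + μ (Ioi t)).toReal :=
          (ENNReal.toReal_add (hfin _) (hfin _)).symm
    _ = 1 := by rw [h1]; simp
  have hF0 : ∀ t, 0 ≤ F t := fun t => ENNReal.toReal_nonneg
  have hG0 : ∀ t, 0 ≤ G t := fun t => by rw [hG]; exact ENNReal.toReal_nonneg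
  have hG1 : ∀ t, G t ≤ 1 := fun t => by linarith [hGF t, hF0 t]
  have hF1 : ∀ t, F t ≤ 1 := fun t => by linarith [hGF t, hG0 t]
  have hFanti : Antitone F := fun a b hab =>
    ENNReal.toReal_mono (hfin _) (measure_mono (Ioi_subset_Ioi hab))
  have hFm : Measurable F := hFanti.measurable
  have hGmono : Monotone G := fun a b hab => by
    rw [hG, hG]; exact ENNReal.toReal_mono (hfin _) (measure_mono (Iic_subset_Iic.mpr hab))
  have hG00 : G 0 = 0 := by rw [hG, hPos]; simp
  have hrc : ∀ x, ContinuousWithinAt F (Ioi x) x := by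
    intro x
    have hFcdf : F = fun t => 1 - (ProbabilityTheory.cdf μ) t := by
      funext t
      have h1 : ProbabilityTheory.cdf μ t = (μ (Iic t)).toReal := ProbabilityTheory.cdf_eq_real (μ := μ) t
      have h2 := hGF t
      rw [hG] at h2
      rw [hFdef]
      linarith
    rw [hFcdf]
    exact continuousWithinAt_const.sub
      (((ProbabilityTheory.cdf μ).right_continuous x).mono Ioi_subset_Ici_self)
  have hae : 0 ≤ᵐ[μ] (id : ℝ → ℝ) := by
    have h1 : ∀ᵐ x ∂μ, (0:ℝ) ≤ x := by
      rw [ae_iff]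
      refine measure_mono_null ?_ hPos
      intro x hx
      simp only [not_le, mem_setOf_eq] at hx
      exact le_of_lt hx
    exact h1
  have hR0 : ∫ t in Ioi 0, F t = 1 / lam := by
    have h1 := hInt.integral_eq_integral_meas_lt hae
    rw [hMean] at h1
    exact h1.symm
  have hFint : IntegrableOn F (Ioi 0) := by
    have hl := lintegral_eq_lintegral_meas_lt μ hae hInt.aemeasurable
    have hfin' : (∫⁻ t in Ioi 0, μ {a : ℝ | t < id a}) ≠ ⊤ := by
      rw [← hl]
      exact hInt.lintegral_lt_top.ne
    exact integrable_toReal_of_lintegral_ne_top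
      ((Antitone.measurable (fun a b hab => measure_mono (Ioi_subset_Ioi hab))).aemeasurable)
      hfin'
  have hbddS : BddAbove S := by
    refine ⟨2, ?_⟩
    rintro v ⟨x, hx, y, hy, hy1, rfl⟩
    have hyx : G y ≤ G (x + y) := hGmono (by linarith)
    have h1 : 0 ≤ resid G y x := div_nonneg (by linarith) (by linarith)
    have h2 : resid G y x ≤ 1 := by
      rw [resid]
      rw [div_le_one (by linarith)]
      linarith [hG1 (x + y)]
    have := hG0 x; have := hG1 x
    rw [abs_le]
    constructor <;> nlinarith
  have hs0 : 0 ≤ s := by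
    have hmem : |G 0 - resid G 0 0| ∈ S := ⟨0, le_rfl, 0, le_rfl, by rw [hG00]; norm_num, rfl⟩
    exact le_trans (abs_nonneg _) (le_csSup hbddS hmem)
  have hsS : ∀ x ≥ (0:ℝ), ∀ y ≥ (0:ℝ), G y < 1 → |G x - resid G y x| ≤ s :=
    fun x hx y hy h1 => le_csSup hbddS ⟨x, hx, y, hy, h1, rfl⟩
  have hptwise : ∀ x, 0 ≤ x → ∀ y, 0 ≤ y → |F (x + y) - F x * F y| ≤ s * F y := by
    intro x hx y hy
    by_cases hGy : G y < 1
    · have hm := hsS x hx y hy hGy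
      have hc : 0 < 1 - G y := by linarith
      have hFy : F y = 1 - G y := by linarith [hGF y]
      have hFx : F x = 1 - G x := by linarith [hGF x]
      have hFxy : F (x + y) = 1 - G (x + y) := by linarith [hGF (x + y)]
      have e : F (x + y) - F x * F y = (G x - resid G y x) * (1 - G y) := by
        rw [hFy, hFx, hFxy, resid]
        field_simp
        ring
      rw [e, abs_mul, abs_of_pos hc, hFy]
      exact mul_le_mul_of_nonneg_right hm hc.le
    · have hGy1 : G y = 1 := le_antisymm (hG1 y) (not_lt.mp hGy)
      have hFy : F y = 0 := by linarith [hGF y]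
      have hFxy : F (x + y) = 0 :=
        le_antisymm (by calc F (x + y) ≤ F y := hFanti (by linarith)
                          _ = 0 := hFy) (hF0 _)
      rw [hFy, hFxy]
      simp
  have hpt : ∀ x, 0 ≤ x → |F x - lam * ∫ t in Ioi x, F t| ≤ s := by
    intro x hx
    have hIoiX : IntegrableOn F (Ioi x) := hFint.mono_set (Ioi_subset_Ioi hx)
    have hindeq : ∀ y : ℝ,
        (Ioi x).indicator F (y + x) = (Ioi 0).indicator (fun z => F (x + z)) y := by
      intro y
      simp only [Set.indicator_apply, mem_Ioi, lt_add_iff_pos_left]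
      by_cases hy : 0 < y
      · simp [hy, add_comm]
      · simp [hy]
    have htr : ∫ t in Ioi x, F t = ∫ y in Ioi 0, F (x + y) := by
      rw [← integral_indicator measurableSet_Ioi, ← integral_indicator measurableSet_Ioi]
      have hmp := (measurePreserving_add_right (volume : Measure ℝ) x).integral_comp
        (MeasurableEquiv.addRight x).measurableEmbedding ((Ioi x).indicator F)
      rw [← hmp]
      congr 1
      funext y
      exact hindeq y
    have hshift : IntegrableOn (fun y => F (x + y)) (Ioi 0) := by
      refine (integrable_indicator_iff measurableSet_Ioi).mp ?_
      have h1 : Integrable ((Ioi x).indicator F) volume :=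
        (integrable_indicator_iff measurableSet_Ioi).mpr hIoiX
      have h2 := ((measurePreserving_add_right (volume : Measure ℝ) x).integrable_comp_emb
        (MeasurableEquiv.addRight x).measurableEmbedding).mpr h1
      have h3 : ((Ioi x).indicator F ∘ fun y => y + x)
          = (Ioi 0).indicator (fun z => F (x + z)) := funext fun y => hindeq y
      rw [← h3]
      exact h2
    have hprod : IntegrableOn (fun y => F x * F y) (Ioi 0) := hFint.const_mul (F x)
    have hsF : IntegrableOn (fun y => s * F y) (Ioi 0) := hFint.const_mul s
    have hmono : |∫ y in Ioi 0, (F (x + y) - F x * F y)| ≤ s * (1 / lam) := by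
      calc |∫ y in Ioi 0, (F (x + y) - F x * F y)|
          ≤ ∫ y in Ioi 0, |F (x + y) - F x * F y| := by
            simpa [Real.norm_eq_abs] using norm_integral_le_integral_norm
              (μ := volume.restrict (Ioi 0)) (fun y => F (x + y) - F x * F y)
      _ ≤ ∫ y in Ioi 0, s * F y :=
          setIntegral_mono_on ((hshift.sub hprod).abs) hsF measurableSet_Ioi
            (fun y hy => hptwise x hx y (le_of_lt hy))
      _ = s * (1 / lam) := by rw [integral_const_mul, hR0]
    have hsubint : ∫ y in Ioi 0, (F (x + y) - F x * F y)
        = (∫ t in Ioi x, F t) - F x * (1 / lam) := by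
      rw [integral_sub hshift hprod, ← htr, integral_const_mul, hR0]
    rw [hsubint] at hmono
    have e2 : F x - lam * (∫ t in Ioi x, F t)
        = -(lam * ((∫ t in Ioi x, F t) - F x * (1 / lam))) := by
      field_simp
      ring
    calc |F x - lam * ∫ t in Ioi x, F t|
        = lam * |(∫ t in Ioi x, F t) - F x * (1 / lam)| := by
          rw [e2, abs_neg, abs_mul, abs_of_pos hlam]
    _ ≤ lam * (s * (1 / lam)) := mul_le_mul_of_nonneg_left hmono hlam.le
    _ = s := by field_simp
  have hfinal : ∀ x, 0 ≤ x → |G x - (1 - Real.exp (-lam * x))| ≤ 2 * s := by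
    intro x hx
    have hk := av_key F lam s hlam hs0 hFm hF0 hF1 hrc hFint hR0 hpt x hx
    have e : G x - (1 - Real.exp (-lam * x)) = -(F x - Real.exp (-lam * x)) := by
      have := hGF x; linarith
    rw [e, abs_neg]
    nlinarith [Real.exp_pos (-lam * x)]
  have hne : {v : ℝ | ∃ x ≥ (0:ℝ), v = |G x - (1 - Real.exp (-lam * x))|}.Nonempty :=
    ⟨|G 0 - (1 - Real.exp (-lam * 0))|, 0, le_rfl, rfl⟩
  have hle := csSup_le hne (by rintro v ⟨x, hx, rfl⟩; exact hfinal x hx)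
  have hsε : s < ε := hSup
  linarith
end

section
/- Let G be the cumulative distribution function of a positive random variable ζ with finite mean 1/λ = ∫₀^∞ x dG(x), and for y ≥ 0 with G(y) < 1 let G_y(x) = (G(x+y) − G(y))/(1 − G(y)). Suppose G belongs to the class NBU or to the class NWU, and suppose sup over x ≥ 0 and y ≥ 0 (with G(y) < 1) of |G(x) − G_y(x)| < ε for some ε > 0. Then sup over x ≥ 0 of |G(x) − (1 − e^{−λx})| < ε. -/
open MeasureTheory Set

open Filter Topology

lemma av_upper (F : ℝ → ℝ) (c : ℝ) (hc : 0 < c)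
    (h : ∀ a b : ℝ, 0 ≤ a → a ≤ b → F b * (1 + c * (b - a)) ≤ F a) :
    ∀ x : ℝ, 0 ≤ x → F x ≤ F 0 * Real.exp (-c * x) := by
  intro x hx
  have key : ∀ n : ℕ, 1 ≤ n → F x * (1 + c * x / n) ^ n ≤ F 0 := by
    intro n hn
    have hn' : (0:ℝ) < n := by exact_mod_cast hn
    have main : ∀ i : ℕ, i ≤ n → F (i * x / n) * (1 + c * x / n) ^ i ≤ F 0 := by
      intro i hi
      induction i with
      | zero => simp
      | succ i ih =>
        have hi' : i ≤ n := Nat.le_of_succ_le hi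
        have h1 : (0:ℝ) ≤ i * x / n := by positivity
        have h2 : (i:ℝ) * x / n ≤ (i+1) * x / n := by
          gcongr ?_ / _
          nlinarith
        have step := h (i * x / n) ((i+1) * x / n) h1 h2
        have heq : ((i:ℝ)+1) * x / n - i * x / n = x / n := by ring
        rw [heq] at step
        have hpow : (0:ℝ) ≤ (1 + c * x / n) ^ i := by positivity
        have hh := mul_le_mul_of_nonneg_right step hpow
        push_cast
        calc F ((i+1) * x / n) * (1 + c * x / n) ^ (i+1)
            = F ((i+1) * x / n) * (1 + c * (x / n)) * (1 + c * x / n) ^ i := by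
              rw [mul_div_assoc]; ring
          _ ≤ F (i * x / n) * (1 + c * x / n) ^ i := hh
          _ ≤ F 0 := ih hi'
    have h5 := main n le_rfl
    have hx' : (n:ℝ) * x / n = x := by field_simp
    rwa [hx'] at h5
  have hlim : Tendsto (fun n : ℕ => F 0 / (1 + c * x / n) ^ n) atTop
      (𝓝 (F 0 * Real.exp (-c * x))) := by
    have h1 := Real.tendsto_one_add_div_pow_exp (c * x)
    have h2 : Tendsto (fun n : ℕ => F 0 / (1 + c * x / n) ^ n) atTop
        (𝓝 (F 0 / Real.exp (c * x))) :=
      tendsto_const_nhds.div h1 (Real.exp_ne_zero _)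
    have : F 0 / Real.exp (c * x) = F 0 * Real.exp (-c * x) := by
      rw [neg_mul, Real.exp_neg, div_eq_mul_inv]
    rwa [this] at h2
  refine ge_of_tendsto hlim ?_
  filter_upwards [eventually_ge_atTop 1] with n hn
  have hn' : (0:ℝ) < n := by exact_mod_cast hn
  have hpow : (0:ℝ) < (1 + c * x / n) ^ n := by positivity
  rw [le_div_iff₀ hpow]
  exact key n hn

lemma av_lower (F : ℝ → ℝ) (c : ℝ) (hc : 0 < c)
    (h : ∀ a b : ℝ, 0 ≤ a → a ≤ b → F a * (1 - c * (b - a)) ≤ F b) :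
    ∀ x : ℝ, 0 ≤ x → F 0 * Real.exp (-c * x) ≤ F x := by
  intro x hx
  rcases eq_or_lt_of_le hx with rfl | hx'
  · simp
  have key : ∀ n : ℕ, c * x ≤ n → F 0 * (1 - c * x / n) ^ n ≤ F x := by
    intro n hn
    have hn' : (0:ℝ) < n := lt_of_lt_of_le (mul_pos hc hx') hn
    have hfac : 0 ≤ 1 - c * x / n := by
      rw [sub_nonneg, div_le_one hn']
      exact hn
    have main : ∀ i : ℕ, i ≤ n → F 0 * (1 - c * x / n) ^ i ≤ F (i * x / n) := by
      intro i hi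
      induction i with
      | zero => simp
      | succ i ih =>
        have hi' : i ≤ n := Nat.le_of_succ_le hi
        have h1 : (0:ℝ) ≤ i * x / n := by positivity
        have h2 : (i:ℝ) * x / n ≤ (i+1) * x / n := by
          gcongr ?_ / _
          nlinarith
        have step := h (i * x / n) ((i+1) * x / n) h1 h2
        have heq : ((i:ℝ)+1) * x / n - i * x / n = x / n := by ring
        rw [heq] at step
        push_cast
        calc F 0 * (1 - c * x / n) ^ (i+1)
            = F 0 * (1 - c * x / n) ^ i * (1 - c * (x / n)) := by
              rw [mul_div_assoc]; ring
          _ ≤ F (i * x / n) * (1 - c * (x / n)) :=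
              mul_le_mul_of_nonneg_right (ih hi') (by rwa [mul_div_assoc] at hfac)
          _ ≤ F ((i+1) * x / n) := step
    have h5 := main n le_rfl
    have hx'' : (n:ℝ) * x / n = x := by field_simp
    rwa [hx''] at h5
  have hlim : Tendsto (fun n : ℕ => F 0 * (1 - c * x / n) ^ n) atTop
      (𝓝 (F 0 * Real.exp (-c * x))) := by
    have h1 := Real.tendsto_one_add_div_pow_exp (-(c * x))
    have h2 : Tendsto (fun n : ℕ => F 0 * (1 + -(c*x) / n) ^ n) atTop
        (𝓝 (F 0 * Real.exp (-(c*x)))) := tendsto_const_nhds.mul h1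
    have heq : (fun n : ℕ => F 0 * (1 + -(c*x) / n) ^ n)
        = fun n : ℕ => F 0 * (1 - c * x / n) ^ n := by
      funext n; ring_nf
    rw [heq, ← neg_mul] at h2
    exact h2
  refine le_of_tendsto hlim ?_
  have hev : ∀ᶠ n : ℕ in atTop, c * x ≤ n :=
    (tendsto_natCast_atTop_atTop (R := ℝ)).eventually_ge_atTop (c * x)
  filter_upwards [hev] with n hn
  exact key n hn

lemma av_core (Gb F : ℝ → ℝ) (c d1 d2 : ℝ) (hc : 0 < c) (hd1 : 0 ≤ d1) (hd2 : 0 ≤ d2)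
    (hIntGb : ∀ a b : ℝ, 0 ≤ a → a ≤ b → IntegrableOn Gb (Ioc a b))
    (hIntF : ∀ a b : ℝ, 0 ≤ a → a ≤ b → IntegrableOn F (Ioc a b))
    (hFanti : ∀ a b : ℝ, 0 ≤ a → a ≤ b → F b ≤ F a)
    (hsplit : ∀ a b : ℝ, 0 ≤ a → a ≤ b → F a = (∫ t in Ioc a b, Gb t) + F b)
    (hF0 : F 0 = 1 / c)
    (hlb : ∀ t : ℝ, 0 ≤ t → c * F t - d1 ≤ Gb t)
    (hub : ∀ t : ℝ, 0 ≤ t → Gb t ≤ c * F t + d2) :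
    ∀ x : ℝ, 0 ≤ x → |Gb x - Real.exp (-c * x)| ≤ d1 + d2 := by
  have hstep : ∀ a b : ℝ, 0 ≤ a → a ≤ b →
      (b - a) * F b ≤ (∫ t in Ioc a b, F t) ∧ (∫ t in Ioc a b, F t) ≤ (b - a) * F a := by
    intro a b ha hab
    have hvol : (volume (Ioc a b)).toReal = b - a := by
      rw [Real.volume_Ioc, ENNReal.toReal_ofReal (by linarith)]
    have hconst : ∀ C : ℝ, IntegrableOn (fun _ : ℝ => C) (Ioc a b) volume :=
      fun C => (integrableOn_const_iff (by simp)).mpr (Or.inr (by rw [Real.volume_Ioc]; exact ENNReal.ofReal_lt_top))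
    constructor
    · calc (b - a) * F b = ∫ _ in Ioc a b, F b := by
            rw [setIntegral_const, measureReal_def, hvol, smul_eq_mul]
        _ ≤ ∫ t in Ioc a b, F t :=
            setIntegral_mono_on (hconst _) (hIntF a b ha hab) measurableSet_Ioc
              (fun t ht => hFanti t b (le_of_lt (lt_of_le_of_lt ha ht.1)) ht.2)
    · calc (∫ t in Ioc a b, F t) ≤ ∫ _ in Ioc a b, F a :=
            setIntegral_mono_on (hIntF a b ha hab) (hconst _) measurableSet_Ioc
              (fun t ht => hFanti a t ha (le_of_lt ht.1))
        _ = (b - a) * F a := by rw [setIntegral_const, measureReal_def, hvol, smul_eq_mul]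
  have hGbInt : ∀ a b : ℝ, 0 ≤ a → a ≤ b →
      c * ((b - a) * F b) - d1 * (b - a) ≤ (∫ t in Ioc a b, Gb t) ∧
      (∫ t in Ioc a b, Gb t) ≤ c * ((b - a) * F a) + d2 * (b - a) := by
    intro a b ha hab
    have hvol : (volume (Ioc a b)).toReal = b - a := by
      rw [Real.volume_Ioc, ENNReal.toReal_ofReal (by linarith)]
    have hconst : ∀ C : ℝ, IntegrableOn (fun _ : ℝ => C) (Ioc a b) volume :=
      fun C => (integrableOn_const_iff (by simp)).mpr (Or.inr (by rw [Real.volume_Ioc]; exact ENNReal.ofReal_lt_top))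
    have hFint := hIntF a b ha hab
    have h1 : (∫ t in Ioc a b, (c * F t - d1)) ≤ ∫ t in Ioc a b, Gb t :=
      setIntegral_mono_on ((hFint.const_mul c).sub (hconst d1)) (hIntGb a b ha hab)
        measurableSet_Ioc (fun t ht => hlb t (le_of_lt (lt_of_le_of_lt ha ht.1)))
    have h2 : (∫ t in Ioc a b, Gb t) ≤ ∫ t in Ioc a b, (c * F t + d2) :=
      setIntegral_mono_on (hIntGb a b ha hab) ((hFint.const_mul c).add (hconst d2))
        measurableSet_Ioc (fun t ht => hub t (le_of_lt (lt_of_le_of_lt ha ht.1)))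
    have e1 : (∫ t in Ioc a b, (c * F t - d1)) = c * (∫ t in Ioc a b, F t) - d1 * (b - a) := by
      rw [integral_sub (hFint.const_mul c) (hconst d1), integral_const_mul,
        setIntegral_const, measureReal_def, hvol, smul_eq_mul]; ring
    have e2 : (∫ t in Ioc a b, (c * F t + d2)) = c * (∫ t in Ioc a b, F t) + d2 * (b - a) := by
      rw [integral_add (hFint.const_mul c) (hconst d2), integral_const_mul,
        setIntegral_const, measureReal_def, hvol, smul_eq_mul]; ring
    obtain ⟨hs1, hs2⟩ := hstep a b ha hab
    rw [e1] at h1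
    rw [e2] at h2
    constructor
    · nlinarith
    · nlinarith
  have hupper : ∀ x : ℝ, 0 ≤ x →
      c * F x - d1 ≤ (c * F 0 - d1) * Real.exp (-c * x) := by
    have := av_upper (fun t => c * F t - d1) c hc ?_
    · exact fun x hx => this x hx
    · intro a b ha hab
      obtain ⟨h1, _⟩ := hGbInt a b ha hab
      have h2 := hsplit a b ha hab
      nlinarith
  have hlower : ∀ x : ℝ, 0 ≤ x →
      (c * F 0 + d2) * Real.exp (-c * x) ≤ c * F x + d2 := by
    have := av_lower (fun t => c * F t + d2) c hc ?_
    · exact fun x hx => this x hx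
    · intro a b ha hab
      obtain ⟨_, h2'⟩ := hGbInt a b ha hab
      have h2 := hsplit a b ha hab
      nlinarith
  intro x hx
  have hu := hupper x hx
  have hl := hlower x hx
  have hcc : c * F 0 = 1 := by rw [hF0]; field_simp
  rw [hcc] at hu hl
  have hlbx := hlb x hx
  have hubx := hub x hx
  have he1 : Real.exp (-c * x) ≤ 1 := Real.exp_le_one_iff.mpr (by nlinarith)
  have he0 : 0 < Real.exp (-c * x) := Real.exp_pos _
  rw [abs_le]
  constructor
  · nlinarith
  · nlinarith

/-- If the CDF `G` of a positive random variable with mean `1/λ` is NBU or NWU and satisfies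
`sup_{x ≥ 0, y ≥ 0, G(y) < 1} |G(x) - G_y(x)| < ε`, then
`sup_{x ≥ 0} |G(x) - (1 - e^{-λx})| < ε`. -/
theorem azlarov_volodin_bound_NBU_NWU
    (μ : Measure ℝ) [IsProbabilityMeasure μ] (hPos : μ (Set.Iic 0) = 0)
    (G : ℝ → ℝ) (hG : ∀ x, G x = (μ (Set.Iic x)).toReal)
    (lam : ℝ) (hlam : 0 < lam)
    (hInt : Integrable (fun x : ℝ => x) μ)
    (hMean : ∫ x, x ∂μ = 1 / lam)
    (hAging : (∀ x ≥ (0:ℝ), ∀ y ≥ (0:ℝ), 1 - G (x + y) ≤ (1 - G x) * (1 - G y)) ∨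
      (∀ x ≥ (0:ℝ), ∀ y ≥ (0:ℝ), (1 - G x) * (1 - G y) ≤ 1 - G (x + y)))
    (ε : ℝ) (hε : 0 < ε)
    (hSup : sSup {v : ℝ | ∃ x ≥ (0:ℝ), ∃ y ≥ (0:ℝ), G y < 1 ∧ v = |G x - resid G y x|} < ε) :
    sSup {v : ℝ | ∃ x ≥ (0:ℝ), v = |G x - (1 - Real.exp (-lam * x))|} < ε := by
  classical
  set S₁ := {v : ℝ | ∃ x ≥ (0:ℝ), ∃ y ≥ (0:ℝ), G y < 1 ∧ v = |G x - resid G y x|} with hS₁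
  set δ := sSup S₁ with hδ
  -- basic facts about G
  have hG_mono : Monotone G := by
    intro a b hab
    rw [hG, hG]
    exact ENNReal.toReal_mono (measure_ne_top _ _) (measure_mono (Iic_subset_Iic.mpr hab))
  have hG_nonneg : ∀ x, 0 ≤ G x := fun x => by rw [hG]; exact ENNReal.toReal_nonneg
  have hG_le_one : ∀ x, G x ≤ 1 := by
    intro x
    rw [hG]
    have : μ (Iic x) ≤ 1 := prob_le_one
    simpa using ENNReal.toReal_mono (by norm_num) this
  have hG0 : G 0 = 0 := by rw [hG, hPos]; simp
  -- survival function
  set Gb : ℝ → ℝ := fun x => (μ (Ioi x)).toReal with hGb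
  have hsum : ∀ x, G x + Gb x = 1 := by
    intro x
    have h1 : μ (Iic x) + μ (Ioi x) = 1 := by
      have := measure_add_measure_compl (μ := μ) (s := Iic x) measurableSet_Iic
      rwa [compl_Iic, measure_univ] at this
    have h2 := congrArg ENNReal.toReal h1
    rw [ENNReal.toReal_add (measure_ne_top _ _) (measure_ne_top _ _)] at h2
    simp only [ENNReal.toReal_one] at h2
    rw [hG]
    exact h2
  have hGb_eq : ∀ x, Gb x = 1 - G x := fun x => by have := hsum x; linarith
  have hGb_anti : Antitone Gb := by
    intro a b hab
    exact ENNReal.toReal_mono (measure_ne_top _ _) (measure_mono (Ioi_subset_Ioi hab))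
  have hGb_nonneg : ∀ x, 0 ≤ Gb x := fun x => ENNReal.toReal_nonneg
  have hGb_meas : Measurable Gb := hGb_anti.measurable
  -- a.e. positivity
  have hae : 0 ≤ᵐ[μ] fun x : ℝ => x := by
    rw [EventuallyLE, ae_iff]
    refine measure_mono_null ?_ hPos
    intro x hx
    simp only [Pi.zero_apply, not_le, mem_setOf_eq] at hx
    exact le_of_lt hx
  -- layer cake
  have hsetEq : ∀ t : ℝ, {a : ℝ | t < a} = Ioi t := fun t => rfl
  have hlay := lintegral_eq_lintegral_meas_lt μ hae hInt.aemeasurable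
  have hlay' : (∫⁻ ω, ENNReal.ofReal ω ∂μ) = ∫⁻ t in Ioi (0:ℝ), μ (Ioi t) := hlay
  have hfin : (∫⁻ t in Ioi (0:ℝ), μ (Ioi t)) ≠ ⊤ := by
    rw [← hlay']
    exact hInt.lintegral_lt_top.ne
  -- integrability of Gb on Ioi 0
  have hIntGb : IntegrableOn Gb (Ioi (0:ℝ)) volume := by
    constructor
    · exact (hGb_meas.aestronglyMeasurable).restrict
    · rw [hasFiniteIntegral_iff_norm]
      have heq : ∀ t : ℝ, ENNReal.ofReal ‖Gb t‖ = μ (Ioi t) := by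
        intro t
        rw [Real.norm_of_nonneg (hGb_nonneg t)]
        exact ENNReal.ofReal_toReal (measure_ne_top _ _)
      calc (∫⁻ t in Ioi (0:ℝ), ENNReal.ofReal ‖Gb t‖)
          = ∫⁻ t in Ioi (0:ℝ), μ (Ioi t) := by
            exact lintegral_congr fun t => heq t
        _ < ⊤ := lt_top_iff_ne_top.mpr hfin
  -- F
  set F : ℝ → ℝ := fun x => ∫ t in Ioi x, Gb t with hF
  have hF0 : F 0 = 1 / lam := by
    have h1 := hInt.integral_eq_integral_meas_lt hae
    have h2 : (∫ x, x ∂μ) = ∫ t in Ioi (0:ℝ), (μ (Ioi t)).toReal := h1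
    rw [← hMean, h2]
  have hIntGb' : ∀ b : ℝ, 0 ≤ b → IntegrableOn Gb (Ioi b) volume :=
    fun b hb => hIntGb.mono_set (Ioi_subset_Ioi hb)
  have hIntGbIoc : ∀ a b : ℝ, 0 ≤ a → a ≤ b → IntegrableOn Gb (Ioc a b) volume :=
    fun a b ha hab => hIntGb.mono_set (fun t ht => lt_of_le_of_lt ha ht.1)
  have hsplit : ∀ a b : ℝ, 0 ≤ a → a ≤ b → F a = (∫ t in Ioc a b, Gb t) + F b := by
    intro a b ha hab
    have hunion : Ioc a b ∪ Ioi b = Ioi a := Ioc_union_Ioi_eq_Ioi hab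
    calc F a = ∫ t in Ioc a b ∪ Ioi b, Gb t := by rw [hunion]
      _ = (∫ t in Ioc a b, Gb t) + ∫ t in Ioi b, Gb t :=
          setIntegral_union Ioc_disjoint_Ioi_same measurableSet_Ioi
            (hIntGbIoc a b ha hab) (hIntGb' b (le_trans ha hab))
  have hFanti : ∀ a b : ℝ, 0 ≤ a → a ≤ b → F b ≤ F a := by
    intro a b ha hab
    rw [hsplit a b ha hab]
    have : 0 ≤ ∫ t in Ioc a b, Gb t :=
      setIntegral_nonneg measurableSet_Ioc (fun t _ => hGb_nonneg t)
    linarith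
  have hIntFIoc : ∀ a b : ℝ, 0 ≤ a → a ≤ b → IntegrableOn F (Ioc a b) volume := by
    intro a b ha hab
    have hanti : AntitoneOn F (Icc a b) := by
      intro s hs t ht hst
      exact hFanti s t (le_trans ha hs.1) hst
    exact (AntitoneOn.integrableOn_isCompact isCompact_Icc hanti).mono_set Ioc_subset_Icc_self
  -- translation
  have htransInt : ∀ x : ℝ, 0 ≤ x → IntegrableOn (fun y => Gb (x + y)) (Ioi (0:ℝ)) volume := by
    intro x hx
    have h1 : Integrable ((Ioi x).indicator Gb) volume :=
      (integrable_indicator_iff measurableSet_Ioi).mpr (hIntGb' x hx)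
    have h2 : Integrable (fun y => (Ioi x).indicator Gb (y + x)) volume := by
      exact (MeasurePreserving.integrable_comp_emb (measurePreserving_add_right volume x)
        (MeasurableEquiv.addRight x).measurableEmbedding).mpr h1
    have h3 : (fun y => (Ioi x).indicator Gb (y + x))
        = (Ioi (0:ℝ)).indicator (fun y => Gb (x + y)) := by
      funext y
      simp only [Set.indicator_apply, Set.mem_Ioi, lt_add_iff_pos_left]
      by_cases hy : 0 < y
      · simp only [if_pos hy, add_comm]
      · simp only [if_neg hy]
    rw [h3] at h2
    exact (integrable_indicator_iff measurableSet_Ioi).mp h2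
  have htrans : ∀ x : ℝ, 0 ≤ x → (∫ y in Ioi (0:ℝ), Gb (x + y)) = F x := by
    intro x hx
    have h3 : (fun y => (Ioi x).indicator Gb (y + x))
        = (Ioi (0:ℝ)).indicator (fun y => Gb (x + y)) := by
      funext y
      simp only [Set.indicator_apply, Set.mem_Ioi, lt_add_iff_pos_left]
      by_cases hy : 0 < y
      · simp only [if_pos hy, add_comm]
      · simp only [if_neg hy]
    calc (∫ y in Ioi (0:ℝ), Gb (x + y))
        = ∫ y, (Ioi (0:ℝ)).indicator (fun y => Gb (x + y)) y :=
          (integral_indicator measurableSet_Ioi).symm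
      _ = ∫ y, (Ioi x).indicator Gb (y + x) := by rw [h3]
      _ = ∫ y, (Ioi x).indicator Gb y := integral_add_right_eq_self _ x
      _ = F x := integral_indicator measurableSet_Ioi
  -- S₁ facts
  have hbdd : BddAbove S₁ := by
    refine ⟨1, ?_⟩
    rintro v ⟨x, hx, y, hy, hGy, rfl⟩
    have h1 : 0 ≤ G x := hG_nonneg x
    have h2 : G x ≤ 1 := hG_le_one x
    have h3 : 0 ≤ resid G y x := by
      unfold resid
      apply div_nonneg _ (by linarith)
      have := hG_mono (le_add_of_nonneg_left hx : y ≤ x + y)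
      linarith
    have h4 : resid G y x ≤ 1 := by
      unfold resid
      rw [div_le_one (by linarith)]
      have := hG_le_one (x + y)
      linarith
    rw [abs_le]
    constructor <;> linarith
  have h0mem : (0:ℝ) ∈ S₁ := by
    refine ⟨0, le_rfl, 0, le_rfl, by rw [hG0]; norm_num, ?_⟩
    simp [resid, hG0]
  have hδ0 : 0 ≤ δ := le_csSup hbdd h0mem
  have hmem : ∀ x : ℝ, 0 ≤ x → ∀ y : ℝ, 0 ≤ y → G y < 1 → |G x - resid G y x| ≤ δ :=
    fun x hx y hy h => le_csSup hbdd ⟨x, hx, y, hy, h, rfl⟩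
  -- key pointwise bound
  have hkey : ∀ x : ℝ, 0 ≤ x → ∀ y : ℝ, 0 ≤ y →
      |Gb (x + y) - Gb x * Gb y| ≤ δ * Gb y := by
    intro x hx y hy
    by_cases hGy : G y < 1
    · have hGby : 0 < Gb y := by rw [hGb_eq]; linarith
      have hform : G x - resid G y x = (Gb (x + y) - Gb x * Gb y) / Gb y := by
        have hne : (1:ℝ) - G y ≠ 0 := by
          intro h
          rw [sub_eq_zero] at h
          exact absurd h.symm (ne_of_lt hGy)
        unfold resid
        rw [hGb_eq, hGb_eq, hGb_eq]
        field_simp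
        ring
      have h := hmem x hx y hy hGy
      rw [hform, abs_div, abs_of_pos hGby, div_le_iff₀ hGby] at h
      linarith [h]
    · have hGy1 : G y = 1 := le_antisymm (hG_le_one y) (not_lt.mp hGy)
      have hGby : Gb y = 0 := by rw [hGb_eq, hGy1]; ring
      have h1 : Gb (x + y) ≤ Gb y := hGb_anti (le_add_of_nonneg_left hx)
      have h2 : Gb (x + y) = 0 := le_antisymm (hGby ▸ h1) (hGb_nonneg _)
      rw [h2, hGby]
      simp
  -- integrated inequalities
  have hintegrals : ∀ x : ℝ, 0 ≤ x → ∀ C : ℝ,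
      (∫ y in Ioi (0:ℝ), C * Gb y) = C * (1 / lam) := by
    intro x hx C
    rw [integral_const_mul]
    congr 1
  have hsandwich : ∀ x : ℝ, 0 ≤ x →
      ((∀ y : ℝ, 0 ≤ y → Gb (x + y) ≤ Gb x * Gb y) →
        lam * F x ≤ Gb x ∧ Gb x ≤ lam * F x + δ) ∧
      ((∀ y : ℝ, 0 ≤ y → Gb x * Gb y ≤ Gb (x + y)) →
        Gb x ≤ lam * F x ∧ lam * F x - δ ≤ Gb x) := by
    intro x hx
    have hIc : ∀ C : ℝ, IntegrableOn (fun y => C * Gb y) (Ioi (0:ℝ)) volume :=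
      fun C => hIntGb.const_mul C
    have hIshift := htransInt x hx
    constructor
    · intro hNBU
      have hup : (∫ y in Ioi (0:ℝ), Gb (x + y)) ≤ ∫ y in Ioi (0:ℝ), Gb x * Gb y :=
        setIntegral_mono_on hIshift (hIc _) measurableSet_Ioi
          (fun y hy => hNBU y (le_of_lt hy))
      have hlo : (∫ y in Ioi (0:ℝ), (Gb x - δ) * Gb y) ≤ ∫ y in Ioi (0:ℝ), Gb (x + y) := by
        refine setIntegral_mono_on (hIc _) hIshift measurableSet_Ioi ?_
        intro y hy
        have hk := hkey x hx y (le_of_lt hy)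
        rw [abs_le] at hk
        nlinarith [hk.1]
      rw [htrans x hx, hintegrals x hx (Gb x)] at hup
      rw [htrans x hx, hintegrals x hx (Gb x - δ)] at hlo
      rw [mul_one_div, le_div_iff₀ hlam] at hup
      rw [mul_one_div, div_le_iff₀ hlam] at hlo
      constructor
      · linarith [hup, mul_comm lam (F x)]
      · linarith [hlo, mul_comm lam (F x)]
    · intro hNWU
      have hlo : (∫ y in Ioi (0:ℝ), Gb x * Gb y) ≤ ∫ y in Ioi (0:ℝ), Gb (x + y) :=
        setIntegral_mono_on (hIc _) hIshift measurableSet_Ioi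
          (fun y hy => hNWU y (le_of_lt hy))
      have hup : (∫ y in Ioi (0:ℝ), Gb (x + y)) ≤ ∫ y in Ioi (0:ℝ), (Gb x + δ) * Gb y := by
        refine setIntegral_mono_on hIshift (hIc _) measurableSet_Ioi ?_
        intro y hy
        have hk := hkey x hx y (le_of_lt hy)
        rw [abs_le] at hk
        nlinarith [hk.2]
      rw [htrans x hx, hintegrals x hx (Gb x)] at hlo
      rw [htrans x hx, hintegrals x hx (Gb x + δ)] at hup
      rw [mul_one_div, div_le_iff₀ hlam] at hlo
      rw [mul_one_div, le_div_iff₀ hlam] at hup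
      constructor
      · linarith [hlo, mul_comm lam (F x)]
      · linarith [hup, mul_comm lam (F x)]
  -- apply core
  have hcore : ∀ x : ℝ, 0 ≤ x → |Gb x - Real.exp (-lam * x)| ≤ δ := by
    rcases hAging with hNBU | hNWU
    · have hNBU' : ∀ x : ℝ, 0 ≤ x → ∀ y : ℝ, 0 ≤ y → Gb (x + y) ≤ Gb x * Gb y := by
        intro x hx y hy
        have := hNBU x hx y hy
        rw [← hGb_eq, ← hGb_eq, ← hGb_eq] at this
        exact this
      have hbounds : ∀ t : ℝ, 0 ≤ t → lam * F t - 0 ≤ Gb t ∧ Gb t ≤ lam * F t + δ := by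
        intro t ht
        obtain ⟨h1, h2⟩ := (hsandwich t ht).1 (hNBU' t ht)
        exact ⟨by linarith, h2⟩
      have := av_core Gb F lam 0 δ hlam le_rfl hδ0 hIntGbIoc hIntFIoc hFanti hsplit hF0
        (fun t ht => (hbounds t ht).1) (fun t ht => (hbounds t ht).2)
      intro x hx
      have h := this x hx
      rwa [zero_add] at h
    · have hNWU' : ∀ x : ℝ, 0 ≤ x → ∀ y : ℝ, 0 ≤ y → Gb x * Gb y ≤ Gb (x + y) := by
        intro x hx y hy
        have := hNWU x hx y hy
        rw [← hGb_eq, ← hGb_eq, ← hGb_eq] at this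
        exact this
      have hbounds : ∀ t : ℝ, 0 ≤ t → lam * F t - δ ≤ Gb t ∧ Gb t ≤ lam * F t + 0 := by
        intro t ht
        obtain ⟨h1, h2⟩ := (hsandwich t ht).2 (hNWU' t ht)
        exact ⟨h2, by linarith⟩
      have := av_core Gb F lam δ 0 hlam hδ0 le_rfl hIntGbIoc hIntFIoc hFanti hsplit hF0
        (fun t ht => (hbounds t ht).1) (fun t ht => (hbounds t ht).2)
      intro x hx
      have h := this x hx
      rwa [add_zero] at h
  -- conclude
  have hfinal : ∀ x : ℝ, 0 ≤ x → |G x - (1 - Real.exp (-lam * x))| ≤ δ := by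
    intro x hx
    have h := hcore x hx
    have heq : G x - (1 - Real.exp (-lam * x)) = -(Gb x - Real.exp (-lam * x)) := by
      have := hGb_eq x
      linarith
    rw [heq, abs_neg]
    exact h
  have hne2 : {v : ℝ | ∃ x ≥ (0:ℝ), v = |G x - (1 - Real.exp (-lam * x))|}.Nonempty :=
    ⟨|G 0 - (1 - Real.exp (-lam * 0))|, 0, le_rfl, rfl⟩
  have hle : sSup {v : ℝ | ∃ x ≥ (0:ℝ), v = |G x - (1 - Real.exp (-lam * x))|} ≤ δ := by
    apply csSup_le hne2
    rintro v ⟨x, hx, rfl⟩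
    exact hfinal x hx
  exact lt_of_le_of_lt hle hSup
end

section
/- Let G be the cumulative distribution function of a positive random variable with Laplace–Stieltjes transform Ĝ(s) = ∫₀^∞ e^{−sx} dG(x), let λ > 0, let 0 < p ≤ 1 and q > 0, and suppose sup over x ≥ 0 of |G(x) − (1 − e^{−λx})| ≤ 2ε for some ε > 0. Then sup over s ≥ 0 of | p·Ĝ(s/q)/(1 − (1−p)·Ĝ(s/q)) − pλq/(pλq + s) | ≤ 2ε/p. -/
open MeasureTheory Set

lemma tendsto_exp_neg_mul (b : ℝ) (hb : 0 < b) :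
    Filter.Tendsto (fun y : ℝ => Real.exp (-b * y)) Filter.atTop (nhds 0) := by
  have h : Filter.Tendsto (fun y : ℝ => -b * y) Filter.atTop Filter.atBot :=
    Filter.Tendsto.const_mul_atTop_of_neg (neg_neg_iff_pos.mpr hb) Filter.tendsto_id
  exact Real.tendsto_exp_atBot.comp h

lemma integral_exp_neg_mul_Ioi' (a : ℝ) {b : ℝ} (hb : 0 < b) :
    ∫ y in Ioi a, Real.exp (-b * y) = Real.exp (-b * a) / b := by
  have hderiv : ∀ x ∈ Ici a, HasDerivAt (fun y : ℝ => -(Real.exp (-b * y) / b))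
      (Real.exp (-b * x)) x := by
    intro x _
    have : HasDerivAt (fun y : ℝ => Real.exp (-b * y)) (Real.exp (-b * x) * (-b)) x := by
      have h1 : HasDerivAt (fun y : ℝ => -b * y) (-b) x := by
        simpa using (hasDerivAt_id x).const_mul (-b)
      exact (Real.hasDerivAt_exp (-b * x)).comp x h1
    have h2 := (this.div_const b).neg
    have heq : -(Real.exp (-b * x) * -b / b) = Real.exp (-b * x) := by
      rw [mul_neg, neg_div, neg_neg, mul_div_assoc, div_self hb.ne', mul_one]
    rwa [heq] at h2
  have htend : Filter.Tendsto (fun y : ℝ => -(Real.exp (-b * y) / b)) Filter.atTop (nhds 0) := by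
    simpa using ((tendsto_exp_neg_mul b hb).div_const b).neg
  have h := integral_Ioi_of_hasDerivAt_of_tendsto' hderiv (exp_neg_integrableOn_Ioi a hb) htend
  rw [h]; ring

lemma lst_close (μ : Measure ℝ) [IsProbabilityMeasure μ] (hPos : μ (Set.Iic 0) = 0)
    (G : ℝ → ℝ) (hG : ∀ x, G x = (μ (Set.Iic x)).toReal)
    (lam : ℝ) (hlam : 0 < lam) (ε : ℝ)
    (hKolm : ∀ x ≥ (0:ℝ), |G x - (1 - Real.exp (-lam * x))| ≤ 2 * ε)
    (t : ℝ) (ht : 0 < t) :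
    |(∫ x, Real.exp (-t * x) ∂μ) - lam / (lam + t)| ≤ 2 * ε := by
  have hae : ∀ᵐ x ∂μ, 0 < x := by
    rw [ae_iff]
    have : {x : ℝ | ¬ 0 < x} = Iic 0 := by ext x; simp
    rw [this]; exact hPos
  set f : ℝ → ℝ → ℝ := fun x y => if 0 ≤ x ∧ x ≤ y then Real.exp (-t * y) else 0 with hf
  have hset : MeasurableSet {p : ℝ × ℝ | 0 ≤ p.1 ∧ p.1 ≤ p.2} :=
    (measurableSet_le measurable_const measurable_fst).inter
      (measurableSet_le measurable_fst measurable_snd)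
  have huncurry : Function.uncurry f =
      Set.indicator {p : ℝ × ℝ | 0 ≤ p.1 ∧ p.1 ≤ p.2} (fun p => Real.exp (-t * p.2)) := by
    ext p
    by_cases h : 0 ≤ p.1 ∧ p.1 ≤ p.2 <;>
      simp [Function.uncurry, hf, h, Set.indicator, Set.mem_setOf_eq]
  have hmeas : AEStronglyMeasurable (Function.uncurry f) (μ.prod volume) := by
    rw [huncurry]
    exact (((Real.continuous_exp.comp (continuous_const.mul continuous_snd)).stronglyMeasurable).indicator
      hset).aestronglyMeasurable
  -- inner integral in y
  have hinner_x : ∀ x : ℝ, 0 ≤ x → (∫ y, f x y) = Real.exp (-t * x) / t := by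
    intro x hx
    have : (fun y => f x y) = Set.indicator (Ici x) (fun y => Real.exp (-t * y)) := by
      ext y
      by_cases h : x ≤ y <;> simp [hf, h, hx, Set.indicator]
    rw [this, integral_indicator measurableSet_Ici, integral_Ici_eq_integral_Ioi,
      integral_exp_neg_mul_Ioi' x ht]
  have hIcc : ∀ y : ℝ, μ (Icc 0 y) = μ (Iic y) := by
    intro y
    refine le_antisymm (measure_mono Icc_subset_Iic_self) ?_
    calc μ (Iic y) ≤ μ (Icc 0 y ∪ Iic 0) := by
          refine measure_mono fun z hz => ?_
          rcases le_or_gt z 0 with h | h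
          · exact Or.inr h
          · exact Or.inl ⟨h.le, hz⟩
      _ ≤ μ (Icc 0 y) + μ (Iic 0) := measure_union_le _ _
      _ = μ (Icc 0 y) := by rw [hPos, add_zero]
  have hinner_y : ∀ y : ℝ, (∫ x, f x y ∂μ) = Real.exp (-t * y) * G y := by
    intro y
    have : (fun x => f x y) = Set.indicator (Icc 0 y) (fun _ => Real.exp (-t * y)) := by
      ext x
      by_cases h : 0 ≤ x ∧ x ≤ y <;> simp [hf, h, Set.indicator, Set.mem_Icc]
    rw [this, integral_indicator measurableSet_Icc, setIntegral_const, hG y, ← hIcc y,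
      smul_eq_mul, mul_comm]
    rfl
  have hint : Integrable (Function.uncurry f) (μ.prod volume) := by
    rw [integrable_prod_iff hmeas]
    constructor
    · filter_upwards [hae] with x hx
      have : (fun y => Function.uncurry f (x, y)) =
          Set.indicator (Ici x) (fun y => Real.exp (-t * y)) := by
        ext y
        by_cases h : x ≤ y <;> simp [Function.uncurry, hf, h, hx.le, Set.indicator]
      rw [this]
      exact ((Iff.mpr integrableOn_Ici_iff_integrableOn_Ioi)
        (exp_neg_integrableOn_Ioi x ht)).integrable_indicator measurableSet_Ici
    · refine Integrable.mono' (integrable_const (1 / t))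
        (hmeas.norm.integral_prod_right') ?_
      filter_upwards [hae] with x hx
      have hnn : ∀ y, ‖Function.uncurry f (x, y)‖ = f x y := by
        intro y
        rw [Real.norm_of_nonneg]
        · rfl
        · by_cases h : 0 ≤ x ∧ x ≤ y <;> simp [hf, h, Real.exp_nonneg]
      rw [show (∫ y, ‖Function.uncurry f (x, y)‖) = ∫ y, f x y from by
        congr 1; ext y; exact hnn y]
      rw [hinner_x x hx.le, Real.norm_of_nonneg (by positivity)]
      gcongr
      exact Real.exp_le_one_iff.mpr (by nlinarith)
  -- Fubini
  have hswap := integral_integral_swap hint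
  -- LHS of swap
  have hL : (∫ x, ∫ y, f x y ∂volume ∂μ) = (∫ x, Real.exp (-t * x) ∂μ) / t := by
    rw [← integral_div]
    refine integral_congr_ae ?_
    filter_upwards [hae] with x hx
    exact hinner_x x hx.le
  have hR : (∫ y, ∫ x, f x y ∂μ ∂volume) = ∫ y, Real.exp (-t * y) * G y ∂volume :=
    integral_congr_ae (Filter.Eventually.of_forall hinner_y)
  have hGzero : ∀ y : ℝ, y ≤ 0 → G y = 0 := by
    intro y hy
    rw [hG y]
    have : μ (Iic y) = 0 := le_antisymm (hPos ▸ measure_mono (Iic_subset_Iic.mpr hy)) (zero_le)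
    simp [this]
  have hrestrict : (∫ y, Real.exp (-t * y) * G y ∂volume) =
      ∫ y in Ioi 0, Real.exp (-t * y) * G y ∂volume := by
    refine (setIntegral_eq_integral_of_forall_compl_eq_zero fun y hy => ?_).symm
    rw [hGzero y (by simpa using hy), mul_zero]
  have hlst : (∫ x, Real.exp (-t * x) ∂μ) = t * ∫ y in Ioi 0, Real.exp (-t * y) * G y ∂volume := by
    rw [← hrestrict, ← hR, ← hswap, hL]
    field_simp
  -- G properties
  have hGmono : Monotone G := by
    intro a b hab
    rw [hG a, hG b]
    exact ENNReal.toReal_mono (measure_ne_top μ _) (measure_mono (Iic_subset_Iic.mpr hab))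
  have hGmeas : Measurable G := hGmono.measurable
  have hG01 : ∀ y, 0 ≤ G y ∧ G y ≤ 1 := by
    intro y
    rw [hG y]
    refine ⟨ENNReal.toReal_nonneg, ?_⟩
    have := prob_le_one (μ := μ) (s := Iic y)
    simpa using ENNReal.toReal_mono ENNReal.one_ne_top this
  -- integrabilities on Ioi 0
  have hintG : IntegrableOn (fun y => Real.exp (-t * y) * G y) (Ioi 0) volume := by
    refine Integrable.mono' (exp_neg_integrableOn_Ioi 0 ht)
      (((Real.continuous_exp.comp (continuous_const.mul continuous_id)).measurable.mul
        hGmeas).aestronglyMeasurable) ?_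
    refine Filter.Eventually.of_forall fun y => ?_
    rw [Real.norm_eq_abs, abs_mul, abs_of_nonneg (Real.exp_nonneg _),
      abs_of_nonneg (hG01 y).1]
    nlinarith [Real.exp_nonneg (-t * y), (hG01 y).1, (hG01 y).2]
  have hintE : IntegrableOn (fun y => Real.exp (-t * y) * (1 - Real.exp (-lam * y)))
      (Ioi 0) volume := by
    refine Integrable.mono' (exp_neg_integrableOn_Ioi 0 ht)
      (((Real.continuous_exp.comp (continuous_const.mul continuous_id)).mul
        (continuous_const.sub (Real.continuous_exp.comp
          (continuous_const.mul continuous_id)))).aestronglyMeasurable) ?_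
    filter_upwards [ae_restrict_mem measurableSet_Ioi] with y hy
    have hy0 : (0:ℝ) ≤ y := le_of_lt hy
    have h1 : Real.exp (-lam * y) ≤ 1 := Real.exp_le_one_iff.mpr (by nlinarith)
    rw [Real.norm_eq_abs, abs_mul, abs_of_nonneg (Real.exp_nonneg _),
      abs_of_nonneg (by nlinarith [Real.exp_nonneg (-lam * y)])]
    nlinarith [Real.exp_nonneg (-t * y), Real.exp_nonneg (-lam * y)]
  -- exponential LST identity
  have hexpint : (∫ y in Ioi 0, Real.exp (-t * y) * (1 - Real.exp (-lam * y)) ∂volume)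
      = 1 / t - 1 / (t + lam) := by
    have heq : ∀ y : ℝ, Real.exp (-t * y) * (1 - Real.exp (-lam * y))
        = Real.exp (-t * y) - Real.exp (-(t + lam) * y) := by
      intro y
      rw [mul_sub, mul_one, ← Real.exp_add]
      ring_nf
    rw [setIntegral_congr_fun measurableSet_Ioi fun y _ => heq y]
    rw [integral_sub (exp_neg_integrableOn_Ioi 0 ht)
      (exp_neg_integrableOn_Ioi 0 (by linarith))]
    rw [integral_exp_neg_mul_Ioi' 0 ht, integral_exp_neg_mul_Ioi' 0 (show (0:ℝ) < t + lam by linarith)]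
    simp
  have hlamval : lam / (lam + t) = t * (1 / t - 1 / (t + lam)) := by
    field_simp
    ring
  -- difference as integral
  have hdiff : (∫ x, Real.exp (-t * x) ∂μ) - lam / (lam + t) =
      t * ∫ y in Ioi 0, Real.exp (-t * y) * (G y - (1 - Real.exp (-lam * y))) ∂volume := by
    rw [hlst, hlamval, ← hexpint, ← mul_sub, ← integral_sub hintG hintE]
    congr 1
    refine setIntegral_congr_fun measurableSet_Ioi fun y _ => ?_
    ring
  rw [hdiff]
  -- final bound
  have hbound : |∫ y in Ioi 0, Real.exp (-t * y) * (G y - (1 - Real.exp (-lam * y))) ∂volume|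
      ≤ 2 * ε / t := by
    have h1 : ‖∫ y in Ioi 0, Real.exp (-t * y) * (G y - (1 - Real.exp (-lam * y))) ∂volume‖
        ≤ ∫ y in Ioi 0, 2 * ε * Real.exp (-t * y) ∂volume := by
      refine norm_integral_le_of_norm_le ((exp_neg_integrableOn_Ioi 0 ht).const_mul _) ?_
      filter_upwards [ae_restrict_mem measurableSet_Ioi] with y hy
      rw [Real.norm_eq_abs, abs_mul, abs_of_nonneg (Real.exp_nonneg _)]
      have := hKolm y (le_of_lt hy)
      nlinarith [Real.exp_nonneg (-t * y), abs_nonneg (G y - (1 - Real.exp (-lam * y)))]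
    rw [Real.norm_eq_abs] at h1
    refine h1.trans ?_
    rw [MeasureTheory.integral_const_mul, integral_exp_neg_mul_Ioi' 0 ht]
    apply le_of_eq
    simp [div_eq_mul_inv]
  calc |t * ∫ y in Ioi 0, Real.exp (-t * y) * (G y - (1 - Real.exp (-lam * y))) ∂volume|
      = t * |∫ y in Ioi 0, Real.exp (-t * y) * (G y - (1 - Real.exp (-lam * y))) ∂volume| := by
        rw [abs_mul, abs_of_pos ht]
    _ ≤ t * (2 * ε / t) := by
        exact mul_le_mul_of_nonneg_left hbound ht.le
    _ = 2 * ε := by field_simp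

/-- Laplace–Stieltjes transform of a measure on `[0, ∞)`. -/
noncomputable def lst (μ : Measure ℝ) (s : ℝ) : ℝ := ∫ x, Real.exp (-s * x) ∂μ

/-- If the CDF `G` of a positive random variable satisfies
`sup_{x ≥ 0} |G(x) - (1 - e^{-λx})| ≤ 2ε`, then for `0 < p ≤ 1` and `q > 0`,
`sup_{s ≥ 0} |p·Ĝ(s/q)/(1 - (1-p)·Ĝ(s/q)) - pλq/(pλq + s)| ≤ 2ε/p`. -/
theorem lst_geometric_compound_close_to_exponential
    (μ : Measure ℝ) [IsProbabilityMeasure μ] (hPos : μ (Set.Iic 0) = 0)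
    (G : ℝ → ℝ) (hG : ∀ x, G x = (μ (Set.Iic x)).toReal)
    (lam : ℝ) (hlam : 0 < lam)
    (p : ℝ) (hp : 0 < p) (hp1 : p ≤ 1)
    (q : ℝ) (hq : 0 < q)
    (ε : ℝ) (hε : 0 < ε)
    (hKolm : ∀ x ≥ (0:ℝ), |G x - (1 - Real.exp (-lam * x))| ≤ 2 * ε) :
    ∀ s ≥ (0:ℝ),
      |p * lst μ (s / q) / (1 - (1 - p) * lst μ (s / q)) -
        p * lam * q / (p * lam * q + s)| ≤ 2 * ε / p := by
  intro s hs
  have hae : ∀ᵐ x ∂μ, 0 < x := by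
    rw [ae_iff]
    have : {x : ℝ | ¬ 0 < x} = Iic 0 := by ext x; simp
    rw [this]; exact hPos
  rcases eq_or_lt_of_le hs with h0 | hpos
  · -- s = 0
    have hs0 : s = 0 := h0.symm
    subst hs0
    have hl1 : lst μ (0 / q) = 1 := by
      simp [lst]
    rw [hl1]
    have : p * 1 / (1 - (1 - p) * 1) = 1 := by
      field_simp
      rw [sub_sub_cancel, div_self hp.ne']
    rw [this]
    have : p * lam * q / (p * lam * q + 0) = 1 := by
      rw [add_zero, div_self (by positivity)]
    rw [this]
    simp
    positivity
  · -- s > 0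
    set t := s / q with htdef
    have ht : 0 < t := div_pos hpos hq
    have hclose : |lst μ t - lam / (lam + t)| ≤ 2 * ε :=
      lst_close μ hPos G hG lam hlam ε hKolm t ht
    set g := lst μ t with hgdef
    have hg0 : 0 ≤ g := integral_nonneg fun x => Real.exp_nonneg _
    have hintexp : Integrable (fun x => Real.exp (-t * x)) μ := by
      refine Integrable.mono' (integrable_const 1)
        ((Real.continuous_exp.comp (continuous_const.mul continuous_id)).aestronglyMeasurable) ?_
      filter_upwards [hae] with x hx
      rw [Real.norm_of_nonneg (Real.exp_nonneg _)]
      exact Real.exp_le_one_iff.mpr (by nlinarith)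
    have hg1 : g ≤ 1 := by
      have h2 : (∫ _x : ℝ, (1:ℝ) ∂μ) = 1 := by simp
      rw [hgdef]
      show (∫ x, Real.exp (-t * x) ∂μ) ≤ 1
      rw [← h2]
      refine integral_mono_ae hintexp (integrable_const (1:ℝ)) ?_
      filter_upwards [hae] with x hx
      exact Real.exp_le_one_iff.mpr (by nlinarith)
    set e := lam / (lam + t) with hedef
    have he0 : 0 ≤ e := by positivity
    have he1 : e ≤ 1 := by
      rw [div_le_one (by linarith)]
      linarith
    have hDg : p ≤ 1 - (1 - p) * g := by nlinarith
    have hDe : p ≤ 1 - (1 - p) * e := by nlinarith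
    have hDe' : 0 < 1 - (1 - p) * e := lt_of_lt_of_le hp hDe
    have heq : p * lam * q / (p * lam * q + s) = p * e / (1 - (1 - p) * e) := by
      rw [div_eq_div_iff (by positivity) (ne_of_gt hDe'), hedef, htdef]
      have h1 : lam + s / q ≠ 0 := by positivity
      field_simp
      ring
    rw [heq]
    have hident : p * g / (1 - (1 - p) * g) - p * e / (1 - (1 - p) * e)
        = p * (g - e) / ((1 - (1 - p) * g) * (1 - (1 - p) * e)) := by
      have h1 : (1 - (1 - p) * g) ≠ 0 := by nlinarith
      have h2 : (1 - (1 - p) * e) ≠ 0 := by nlinarith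
      rw [div_sub_div _ _ h1 h2]
      congr 1
      ring
    rw [hident, abs_div, abs_mul, abs_of_pos hp,
      abs_of_pos (show (0:ℝ) < (1 - (1 - p) * g) * (1 - (1 - p) * e) by nlinarith)]
    have hfinal : p * |g - e| / ((1 - (1 - p) * g) * (1 - (1 - p) * e))
        ≤ p * (2 * ε) / (p * p) := by
      refine div_le_div₀ (by positivity) ?_ (by positivity) (by nlinarith)
      exact mul_le_mul_of_nonneg_left hclose hp.le
    refine hfinal.trans_eq ?_
    field_simp
end

section
/- Let G be the cumulative distribution function of a positive random variable with finite mean a = ∫₀^∞ x dG(x), let Ĝ(s) = ∫₀^∞ e^{−sx} dG(x) be its Laplace–Stieltjes transform, and let μ > 0 satisfy μ·a > 1. Then the functional equation z = Ĝ(μ − μz) has exactly one root in the interval [0, 1), this root lies in (0, 1), and z = 1 is also a root. -/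
open MeasureTheory Set Filter Topology

private lemma my_integral_lt {m : Measure ℝ} [IsProbabilityMeasure m]
    {f g : ℝ → ℝ} (hfg : ∀ᵐ x ∂m, f x < g x)
    (hf : Integrable f m) (hg : Integrable g m) :
    ∫ x, f x ∂m < ∫ x, g x ∂m := by
  by_contra h
  push_neg at h
  have hle : 0 ≤ᵐ[m] fun x => g x - f x := by
    filter_upwards [hfg] with x hx; simp [le_of_lt hx]
  have hi : Integrable (fun x => g x - f x) m := hg.sub hf
  have h0 : ∫ x, (g x - f x) ∂m = 0 := by
    have h1 := integral_sub hg hf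
    have h2 : 0 ≤ ∫ x, (g x - f x) ∂m := integral_nonneg_of_ae hle
    rw [h1] at h2 ⊢
    linarith
  have heq := (integral_eq_zero_iff_of_nonneg_ae hle hi).mp h0
  obtain ⟨x, hx1, hx2⟩ := (hfg.and heq).exists
  simp only [Pi.zero_apply] at hx2
  change g x - f x = 0 at hx2
  linarith

section main
variable (m : Measure ℝ) [IsProbabilityMeasure m] (hPos : m (Set.Iic 0) = 0)
  (mu : ℝ) (hmu : 0 < mu)

include hPos in
lemma hae_pos : ∀ᵐ x ∂m, 0 < x := by
  rw [ae_iff]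
  convert hPos using 2
  ext x; simp [not_lt]

lemma hmeas (s : ℝ) : AEStronglyMeasurable (fun x => Real.exp (-s * x)) m :=
  (Real.continuous_exp.comp (continuous_const.mul continuous_id)).aestronglyMeasurable

include hPos in
lemma hint (s : ℝ) (hs : 0 ≤ s) : Integrable (fun x => Real.exp (-s * x)) m := by
  refine Integrable.mono' (integrable_const 1) (hmeas m s) ?_
  filter_upwards [hae_pos m hPos] with x hx
  rw [Real.norm_of_nonneg (Real.exp_pos _).le]
  rw [Real.exp_le_one_iff]
  nlinarith

include hPos in
lemma lst_pos (s : ℝ) (hs : 0 ≤ s) : 0 < lst m s := by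
  rw [lst, integral_pos_iff_support_of_nonneg (fun x => (Real.exp_pos _).le) (hint m hPos s hs)]
  have : Function.support (fun x : ℝ => Real.exp (-s * x)) = Set.univ := by
    ext x; simp [Function.support, (Real.exp_pos (-s * x)).ne']
  rw [this]
  simp

lemma lst_zero : lst m 0 = 1 := by
  simp [lst]

include hPos hmu in
lemma no_two (u v : ℝ) (hu0 : 0 ≤ u) (huv : u < v) (hv1 : v < 1)
    (hu : lst m (mu - mu * u) = u) (hv : lst m (mu - mu * v) = v) : False := by
  have h1u : (0:ℝ) < 1 - u := by linarith
  set t : ℝ := (1 - v) / (1 - u) with ht_def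
  have ht0 : 0 < t := div_pos (by linarith) h1u
  have ht1 : t < 1 := (div_lt_one h1u).mpr (by linarith)
  have htmul : mu - mu * v = t * (mu - mu * u) := by
    field_simp [ht_def]
    have h' : t * (1 - u) = 1 - v := by rw [ht_def]; exact div_mul_cancel₀ _ h1u.ne'
    linear_combination -h'
  have hsu : 0 ≤ mu - mu * u := by nlinarith
  have hsv : 0 ≤ mu - mu * v := by nlinarith
  have hptw : ∀ᵐ x ∂m, Real.exp (-(mu - mu * v) * x) <
      t * Real.exp (-(mu - mu * u) * x) + (1 - t) := by
    filter_upwards [hae_pos m hPos] with x hx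
    have hp : -(mu - mu * u) * x < 0 := by nlinarith [mul_pos (show (0:ℝ) < mu - mu * u by nlinarith) hx]
    have := strictConvexOn_exp.2 (Set.mem_univ (-(mu - mu * u) * x)) (Set.mem_univ (0:ℝ))
      (ne_of_lt hp) ht0 (by linarith : (0:ℝ) < 1 - t) (by ring)
    simp only [smul_eq_mul, mul_zero, add_zero, Real.exp_zero, mul_one] at this
    calc Real.exp (-(mu - mu * v) * x) = Real.exp (t * (-(mu - mu * u) * x)) := by
          rw [htmul]; ring_nf
      _ < t * Real.exp (-(mu - mu * u) * x) + (1 - t) := this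
  have hlt := my_integral_lt hptw (hint m hPos _ hsv)
    (((hint m hPos _ hsu).const_mul t).add (integrable_const (1 - t)))
  rw [integral_add ((hint m hPos _ hsu).const_mul t) (integrable_const (1 - t)),
    integral_const_mul, integral_const] at hlt
  simp only [measure_univ, ENNReal.toReal_one, probReal_univ, smul_eq_mul, one_mul] at hlt
  have : lst m (mu - mu * v) < t * lst m (mu - mu * u) + (1 - t) := hlt
  rw [hu, hv] at this
  have : v < t * u + (1 - t) := this
  have heq : t * u + (1 - t) = v := by
    field_simp [ht_def]
    have h' : t * (1 - u) = 1 - v := by rw [ht_def]; exact div_mul_cancel₀ _ h1u.ne'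
    linear_combination -h'
  linarith

include hPos hmu in
lemma exists_w (a : ℝ) (hInt : Integrable (fun x : ℝ => x) m) (ha : ∫ x, x ∂m = a)
    (hma : 1 < mu * a) :
    ∃ w : ℝ, 0 < w ∧ w < 1 ∧ lst m (mu - mu * w) < w := by
  set F : ℕ → ℝ → ℝ := fun n x => ((n:ℝ)+1) * (1 - Real.exp (-(mu / ((n:ℝ)+1)) * x)) with hF
  have hT : Tendsto (fun n => ∫ x, F n x ∂m) atTop (𝓝 (∫ x, mu * x ∂m)) := by
    refine tendsto_integral_of_dominated_convergence (fun x => mu * x) ?_ (hInt.const_mul mu) ?_ ?_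
    · intro n
      exact (continuous_const.mul (continuous_const.sub
        (Real.continuous_exp.comp (continuous_const.mul continuous_id)))).aestronglyMeasurable
    · intro n
      filter_upwards [hae_pos m hPos] with x hx
      have hn : (0:ℝ) < (n:ℝ) + 1 := by positivity
      have hu : 0 ≤ mu / ((n:ℝ)+1) * x := mul_nonneg (div_nonneg hmu.le hn.le) hx.le
      have h1 : Real.exp (-(mu / ((n:ℝ)+1)) * x) ≤ 1 := by
        rw [Real.exp_le_one_iff]; nlinarith
      have h2 : 1 - (mu / ((n:ℝ)+1)) * x ≤ Real.exp (-(mu / ((n:ℝ)+1)) * x) := by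
        have := Real.add_one_le_exp (-(mu / ((n:ℝ)+1)) * x)
        linarith
      have hF0 : 0 ≤ F n x := by
        have h3 : (0:ℝ) ≤ 1 - Real.exp (-(mu / ((n:ℝ)+1)) * x) := by linarith
        have := mul_nonneg hn.le h3
        simpa [hF] using this
      rw [Real.norm_of_nonneg hF0]
      have : ((n:ℝ)+1) * (1 - Real.exp (-(mu / ((n:ℝ)+1)) * x)) ≤
          ((n:ℝ)+1) * ((mu / ((n:ℝ)+1)) * x) := by
        apply mul_le_mul_of_nonneg_left _ hn.le
        linarith
      calc F n x ≤ ((n:ℝ)+1) * ((mu / ((n:ℝ)+1)) * x) := this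
        _ = mu * x := by field_simp
    · filter_upwards with x
      have hd : HasDerivAt (fun t : ℝ => 1 - Real.exp (-(mu * x) * t)) (mu * x) 0 := by
        have h1 : HasDerivAt (fun t : ℝ => -(mu * x) * t) (-(mu * x)) 0 :=
          (hasDerivAt_id (0:ℝ)).const_mul (-(mu * x)) |>.congr_deriv (by ring)
        have h2 := h1.exp
        simp only [mul_zero, Real.exp_zero, one_mul] at h2
        have h3 := h2.const_sub 1
        rw [neg_neg] at h3
        exact h3
      rw [hasDerivAt_iff_tendsto_slope] at hd
      have ht : Tendsto (fun n : ℕ => 1 / ((n:ℝ)+1)) atTop (𝓝[≠] 0) := by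
        apply tendsto_nhdsWithin_of_tendsto_nhds_of_eventually_within _
          tendsto_one_div_add_atTop_nhds_zero_nat
        filter_upwards with n
        have : (0:ℝ) < 1 / ((n:ℝ)+1) := by positivity
        exact this.ne'
      have hcomp := hd.comp ht
      refine hcomp.congr ?_
      intro n
      have hn : (0:ℝ) < (n:ℝ) + 1 := by positivity
      have hs : slope (fun t : ℝ => 1 - Real.exp (-(mu * x) * t)) 0 (1/((n:ℝ)+1))
          = (1 - Real.exp (-(mu * x) * (1/((n:ℝ)+1)))) / (1/((n:ℝ)+1)) := by
        rw [slope_def_field]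
        simp
      have hexp : -(mu * x) * (1/((n:ℝ)+1)) = -(mu / ((n:ℝ)+1)) * x := by
        field_simp
      show slope _ 0 (1/((n:ℝ)+1)) = F n x
      rw [hs, hexp, hF, div_eq_iff (ne_of_gt (by positivity : (0:ℝ) < 1/((n:ℝ)+1)))]
      field_simp
  have hma' : 1 < ∫ x, mu * x ∂m := by
    rw [show (fun x : ℝ => mu * x) = fun x : ℝ => mu * (fun y : ℝ => y) x from rfl,
      integral_const_mul, ha]
    exact hma
  obtain ⟨n, hn1⟩ := (hT.eventually (eventually_gt_nhds hma')).exists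
  have hnpos : (0:ℝ) < (n:ℝ) + 1 := by positivity
  have hspos : 0 ≤ mu / ((n:ℝ)+1) := div_nonneg hmu.le hnpos.le
  have hg := hint m hPos (mu / ((n:ℝ)+1)) hspos
  have hFn : ∫ x, F n x ∂m = ((n:ℝ)+1) * (1 - lst m (mu / ((n:ℝ)+1))) := by
    rw [hF]
    simp only []
    rw [integral_const_mul, integral_sub (integrable_const 1) hg]
    simp [lst]
  rw [hFn] at hn1
  set L := lst m (mu / ((n:ℝ)+1)) with hL
  have hLpos : 0 < L := lst_pos m hPos _ hspos
  have hLw : L < 1 - 1/((n:ℝ)+1) := by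
    have h4 : 1/((n:ℝ)+1) < 1 - L := by
      rw [div_lt_iff₀ hnpos]
      nlinarith
    linarith
  refine ⟨1 - 1/((n:ℝ)+1), by linarith, ?_, ?_⟩
  · have : (0:ℝ) < 1/((n:ℝ)+1) := by positivity
    linarith
  · have heq : mu - mu * (1 - 1/((n:ℝ)+1)) = mu / ((n:ℝ)+1) := by
      field_simp
      ring
    rw [heq, ← hL]
    exact hLw

include hPos hmu in
lemma cont_at (z : ℝ) (hz : z < 1) :
    ContinuousAt (fun z : ℝ => lst m (mu - mu * z)) z := by
  have : (fun z : ℝ => lst m (mu - mu * z))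
      = fun z : ℝ => ∫ x, Real.exp (-(mu - mu * z) * x) ∂m := rfl
  rw [this]
  apply continuousAt_of_dominated (bound := fun _ : ℝ => (1:ℝ))
  · filter_upwards with z'
    exact hmeas m _
  · filter_upwards [eventually_lt_nhds hz] with z' hz'
    filter_upwards [hae_pos m hPos] with x hx
    rw [Real.norm_of_nonneg (Real.exp_pos _).le, Real.exp_le_one_iff]
    nlinarith [mul_nonneg (show (0:ℝ) ≤ mu - mu * z' by nlinarith) hx.le]
  · exact integrable_const 1
  · filter_upwards with x
    exact (Real.continuous_exp.comp
      ((continuous_const.sub (continuous_const.mul continuous_id)).neg.mul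
        continuous_const)).continuousAt

end main

/-- Takács: if `G` is the CDF of a positive random variable with finite mean `a` and
`μ·a > 1`, then the functional equation `z = Ĝ(μ - μz)` has exactly one root in `[0, 1)`,
this root lies in `(0, 1)`, and `z = 1` is also a root. -/
theorem takacs_least_root
    (m : Measure ℝ) [IsProbabilityMeasure m] (hPos : m (Set.Iic 0) = 0)
    (a : ℝ) (hInt : Integrable (fun x : ℝ => x) m) (ha : ∫ x, x ∂m = a)
    (mu : ℝ) (hmu : 0 < mu) (hma : 1 < mu * a) :
    (∃! z : ℝ, z ∈ Set.Ico (0:ℝ) 1 ∧ z = lst m (mu - mu * z)) ∧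
    (∀ z ∈ Set.Ico (0:ℝ) 1, z = lst m (mu - mu * z) → z ∈ Set.Ioo (0:ℝ) 1) ∧
    (1 : ℝ) = lst m (mu - mu * 1) := by
  have part3 : (1 : ℝ) = lst m (mu - mu * 1) := by
    rw [show mu - mu * 1 = 0 by ring, lst_zero]
  have hpos' : ∀ z : ℝ, z < 1 → 0 < lst m (mu - mu * z) := by
    intro z hz
    exact lst_pos m hPos _ (by nlinarith)
  have part2 : ∀ z ∈ Set.Ico (0:ℝ) 1, z = lst m (mu - mu * z) → z ∈ Set.Ioo (0:ℝ) 1 := by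
    intro z hz hfix
    exact ⟨hfix ▸ hpos' z hz.2, hz.2⟩
  obtain ⟨w, hw0, hw1, hwlt⟩ := exists_w m hPos mu hmu a hInt ha hma
  set g : ℝ → ℝ := fun z => lst m (mu - mu * z) - z with hg
  have hgcont : ContinuousOn g (Set.Icc 0 w) := by
    intro z hz
    apply ContinuousAt.continuousWithinAt
    exact ((cont_at m hPos mu hmu z (lt_of_le_of_lt hz.2 hw1)).sub continuousAt_id)
  have hg0 : 0 < g 0 := by
    have h0 : 0 < lst m (mu - mu * 0) := hpos' 0 (by norm_num)
    rw [show mu - mu * 0 = mu by ring] at h0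
    simp [hg]
    linarith
  have hgw : g w < 0 := by simp [hg]; linarith
  have hmem : (0:ℝ) ∈ Set.Icc (g w) (g 0) := ⟨hgw.le, hg0.le⟩
  obtain ⟨z, hzmem, hzfix⟩ := intermediate_value_Icc' hw0.le hgcont hmem
  have hzfix' : z = lst m (mu - mu * z) := by
    have : lst m (mu - mu * z) - z = 0 := hzfix
    linarith
  have hz1 : z < 1 := lt_of_le_of_lt hzmem.2 hw1
  have hzIco : z ∈ Set.Ico (0:ℝ) 1 := ⟨hzmem.1, hz1⟩
  refine ⟨⟨z, ⟨hzIco, hzfix'⟩, ?_⟩, part2, part3⟩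
  rintro y ⟨hyIco, hyfix⟩
  by_contra hne
  rcases lt_or_gt_of_ne hne with h | h
  · exact no_two m hPos mu hmu y z hyIco.1 h hz1 hyfix.symm hzfix'.symm
  · exact no_two m hPos mu hmu z y hzmem.1 h hyIco.2 hzfix'.symm hyfix.symm
end

section
/- Let G be the cumulative distribution function of a positive random variable with finite first and second moments a = ∫₀^∞ x dG(x) and b = ∫₀^∞ x² dG(x), with b > a², let μ > 1/a, and let γ be the least positive root of z = Ĝ(μ − μz), where Ĝ(s) = ∫₀^∞ e^{−sx} dG(x). Let ℓ be the least positive root of the equation x = e^{−aμ + aμx} (which lies in (0,1) since aμ > 1). Then ℓ ≤ γ ≤ 1 + (a²/b)(ℓ − 1). -/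
open MeasureTheory Set

lemma rolski_core (t u : ℝ) (ht : 0 < t) (hu : 0 < u) :
    (1 - Real.exp (-u))/u - (1 - (u+1)*Real.exp (-u))/u^2 * (t - u) ≤ (1 - Real.exp (-t))/t := by
  have ct : Continuous fun v : ℝ => Real.exp (-(t*v)) := by fun_prop
  have cu : Continuous fun v : ℝ => Real.exp (-(u*v)) := by fun_prop
  have cu2 : Continuous fun v : ℝ => v * Real.exp (-(u*v)) := by fun_prop
  have I1 : ∫ v in (0:ℝ)..1, Real.exp (-(t*v)) = (1 - Real.exp (-t))/t := by
    rw [intervalIntegral.integral_eq_sub_of_hasDerivAt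
      (f := fun v => -Real.exp (-(t*v))/t) (fun x _ => ?_)
      (ct.intervalIntegrable 0 1)]
    · field_simp
      simp; ring
    · have h1 : HasDerivAt (fun v : ℝ => -(t*v)) (-t) x := by
        simpa using ((hasDerivAt_id x).const_mul t).fun_neg
      have := (h1.exp.fun_neg).div_const t
      refine this.congr_deriv ?_
      field_simp
  have I2 : ∫ v in (0:ℝ)..1, Real.exp (-(u*v)) = (1 - Real.exp (-u))/u := by
    rw [intervalIntegral.integral_eq_sub_of_hasDerivAt
      (f := fun v => -Real.exp (-(u*v))/u) (fun x _ => ?_)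
      (cu.intervalIntegrable 0 1)]
    · field_simp
      simp; ring
    · have h1 : HasDerivAt (fun v : ℝ => -(u*v)) (-u) x := by
        simpa using ((hasDerivAt_id x).const_mul u).fun_neg
      have := (h1.exp.fun_neg).div_const u
      refine this.congr_deriv ?_
      field_simp
  have I3 : ∫ v in (0:ℝ)..1, v * Real.exp (-(u*v)) = (1 - (u+1)*Real.exp (-u))/u^2 := by
    rw [intervalIntegral.integral_eq_sub_of_hasDerivAt
      (f := fun v => -((u*v+1) * Real.exp (-(u*v)))/u^2) (fun x _ => ?_)
      (cu2.intervalIntegrable 0 1)]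
    · field_simp
      simp; ring
    · have h1 : HasDerivAt (fun v : ℝ => -(u*v)) (-u) x := by
        simpa using ((hasDerivAt_id x).const_mul u).fun_neg
      have h2 : HasDerivAt (fun v : ℝ => u*v+1) u x := by
        simpa using ((hasDerivAt_id x).const_mul u).add_const 1
      have := ((h2.fun_mul h1.exp).fun_neg).div_const (u^2)
      refine this.congr_deriv ?_
      have hu' : u ≠ 0 := ne_of_gt hu
      field_simp
      ring
  have mono : ∫ v in (0:ℝ)..1, (Real.exp (-(u*v)) - (t-u) * (v * Real.exp (-(u*v))))
      ≤ ∫ v in (0:ℝ)..1, Real.exp (-(t*v)) := by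
    apply intervalIntegral.integral_mono_on zero_le_one
    · exact (cu.sub (continuous_const.mul cu2)).intervalIntegrable 0 1
    · exact ct.intervalIntegrable 0 1
    · intro v _
      have h := Real.add_one_le_exp (-((t-u)*v))
      have hpos := Real.exp_pos (-(u*v))
      have hE : Real.exp (-(t*v)) = Real.exp (-(u*v)) * Real.exp (-((t-u)*v)) := by
        rw [← Real.exp_add]; ring_nf
      rw [hE]
      nlinarith [Real.exp_pos (-((t-u)*v))]
  rw [intervalIntegral.integral_sub (cu.intervalIntegrable 0 1)
    ((cu2.intervalIntegrable 0 1).const_mul (t-u)),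
    intervalIntegral.integral_const_mul, I2, I3, I1] at mono
  linarith

/-- Rolski's bounds: if `G` is the CDF of a positive random variable with first two moments
`a` and `b`, `b > a²`, `μ > 1/a`, `γ` is the least positive root of `z = Ĝ(μ - μz)` and `ℓ`
is the least positive root of `x = e^{-aμ + aμx}`, then `ℓ ≤ γ ≤ 1 + (a²/b)(ℓ - 1)`. -/
theorem rolski_bounds
    (m : Measure ℝ) [IsProbabilityMeasure m] (hPos : m (Set.Iic 0) = 0)
    (a b : ℝ) (ha0 : 0 < a)
    (hInt1 : Integrable (fun x : ℝ => x) m) (ha : ∫ x, x ∂m = a)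
    (hInt2 : Integrable (fun x : ℝ => x ^ 2) m) (hb : ∫ x, x ^ 2 ∂m = b)
    (hba : a ^ 2 < b)
    (mu : ℝ) (hmu : 1 / a < mu)
    (γ : ℝ)
    (hγ : γ ∈ Set.Ioo (0:ℝ) 1 ∧ γ = lst m (mu - mu * γ) ∧
      ∀ z ∈ Set.Ioo (0:ℝ) 1, z = lst m (mu - mu * z) → γ ≤ z)
    (ℓ : ℝ)
    (hℓ : ℓ ∈ Set.Ioo (0:ℝ) 1 ∧ ℓ = Real.exp (-(a * mu) + a * mu * ℓ) ∧
      ∀ z ∈ Set.Ioo (0:ℝ) 1, z = Real.exp (-(a * mu) + a * mu * z) → ℓ ≤ z) :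
    ℓ ≤ γ ∧ γ ≤ 1 + a ^ 2 / b * (ℓ - 1) := by
  obtain ⟨⟨hγ0, hγ1⟩, hγeq, -⟩ := hγ
  obtain ⟨⟨hℓ0, hℓ1⟩, hℓeq, -⟩ := hℓ
  have hmu0 : 0 < mu := lt_trans (by positivity) hmu
  have hamu : 1 < a * mu := by
    rw [div_lt_iff₀ ha0] at hmu; linarith [hmu]
  have hbpos : 0 < b := lt_trans (by positivity) hba
  have hs0 : 0 < mu * (1 - γ) := mul_pos hmu0 (by linarith)
  set s : ℝ := mu * (1 - γ) with hs_def
  clear_value s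
  have hae : ∀ᵐ x ∂m, 0 < x := by
    rw [ae_iff]
    have he : {x : ℝ | ¬ 0 < x} = Set.Iic 0 := by ext x; simp [not_lt]
    rw [he]; exact hPos
  have hintexp : Integrable (fun x => Real.exp (-(s*x))) m := by
    refine (integrable_const (1:ℝ)).mono' (Continuous.aestronglyMeasurable (by fun_prop)) ?_
    filter_upwards [hae] with x hx
    rw [Real.norm_eq_abs, abs_of_pos (Real.exp_pos _)]
    exact Real.exp_le_one_iff.2 (by nlinarith)
  have hγint : γ = ∫ x, Real.exp (-(s*x)) ∂m := by
    rw [hγeq]; unfold lst; congr 1; funext x; congr 1; rw [hs_def]; ring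
  -- Step 1: Jensen lower bound  exp(-(s*a)) ≤ γ
  have key1 : Real.exp (-(s*a)) ≤ γ := by
    have tangent : ∀ x : ℝ, Real.exp (-(s*a)) * (1 - s*(x-a)) ≤ Real.exp (-(s*x)) := by
      intro x
      have h := Real.add_one_le_exp (-(s*(x-a)))
      have hE : Real.exp (-(s*x)) = Real.exp (-(s*a)) * Real.exp (-(s*(x-a))) := by
        rw [← Real.exp_add]; ring_nf
      rw [hE]
      have := Real.exp_pos (-(s*a))
      nlinarith
    have hia : Integrable (fun x : ℝ => s*(x-a)) m := by
      have : Integrable (fun x : ℝ => x - a) m := hInt1.sub (integrable_const a)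
      exact this.const_mul s
    have hi1 : Integrable (fun x : ℝ => 1 - s*(x-a)) m := (integrable_const 1).sub hia
    have hil : Integrable (fun x : ℝ => Real.exp (-(s*a)) * (1 - s*(x-a))) m :=
      hi1.const_mul _
    have hle := integral_mono hil hintexp tangent
    have hval : ∫ x, Real.exp (-(s*a)) * (1 - s*(x-a)) ∂m = Real.exp (-(s*a)) := by
      rw [integral_const_mul, integral_sub (integrable_const 1) hia, integral_const_mul,
        integral_sub hInt1 (integrable_const a), ha, integral_const, integral_const]
      simp
    rw [hval, ← hγint] at hle
    exact hle
  -- Lower bound : ℓ ≤ γ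
  have hlow : ℓ ≤ γ := by
    by_contra hcon
    push_neg at hcon
    have h1γ : 0 < 1 - γ := by linarith
    have hσ : 0 < (1-ℓ)/(1-γ) := div_pos (by linarith) h1γ
    have hτ : 0 < (ℓ-γ)/(1-γ) := div_pos (by linarith) h1γ
    have hστ : (1-ℓ)/(1-γ) + (ℓ-γ)/(1-γ) = 1 := by
      rw [← add_div, div_eq_one_iff_eq (ne_of_gt h1γ)]; ring
    have hpne : -(a*mu) + a*mu*γ ≠ (0:ℝ) := by nlinarith
    have hconv := strictConvexOn_exp.2 (Set.mem_univ (-(a*mu) + a*mu*γ))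
        (Set.mem_univ (0:ℝ)) hpne hσ hτ hστ
    simp only [smul_eq_mul, mul_zero, add_zero, Real.exp_zero, mul_one] at hconv
    have harg : (1-ℓ)/(1-γ) * (-(a*mu) + a*mu*γ) = -(a*mu) + a*mu*ℓ := by
      field_simp; ring
    rw [harg, ← hℓeq] at hconv
    have hp : -(a*mu) + a*mu*γ = -(s*a) := by rw [hs_def]; ring
    rw [hp] at hconv
    have h2 : (1-ℓ)/(1-γ) * Real.exp (-(s*a)) ≤ (1-ℓ)/(1-γ) * γ := by nlinarith
    have h3 : (1-ℓ)/(1-γ) * γ + (ℓ-γ)/(1-γ) = ℓ := by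
      field_simp; ring
    linarith
  refine ⟨hlow, ?_⟩
  -- Upper bound
  have hx₀ : 0 < b/a := div_pos hbpos ha0
  set x₀ : ℝ := b / a with hx₀_def
  set E : ℝ := Real.exp (-(s*x₀)) with hE_def
  set c1 : ℝ := (1-E)/x₀ with hc1_def
  set c2 : ℝ := -((1-(s*x₀+1)*E)/x₀^2) with hc2_def
  clear_value x₀ E c1 c2
  have pointwise : ∀ x : ℝ, 0 < x → c1*x + c2*(x^2 - x₀*x) ≤ 1 - Real.exp (-(s*x)) := by
    intro x hx
    have hc := rolski_core (s*x) (s*x₀) (mul_pos hs0 hx) (mul_pos hs0 hx₀)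
    have hsx : 0 < s*x := mul_pos hs0 hx
    have h1 : s*x*((1 - Real.exp (-(s*x)))/(s*x)) = 1 - Real.exp (-(s*x)) := by
      field_simp
    have h2 : s*x*((1 - Real.exp (-(s*x₀)))/(s*x₀)
        - (1-(s*x₀+1)*Real.exp (-(s*x₀)))/(s*x₀)^2*(s*x - s*x₀))
        = c1*x + c2*(x^2 - x₀*x) := by
      rw [hc1_def, hc2_def, hE_def]
      have hs' : s ≠ 0 := ne_of_gt hs0
      have hx₀' : x₀ ≠ 0 := ne_of_gt hx₀
      field_simp
      ring
    have hmul := mul_le_mul_of_nonneg_left hc (le_of_lt hsx)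
    rw [h1, h2] at hmul
    exact hmul
  have hx₀a : x₀ * a = b := by rw [hx₀_def]; field_simp
  have ic2 : Integrable (fun x : ℝ => x^2 - x₀*x) m := hInt2.sub (hInt1.const_mul x₀)
  have i2 : Integrable (fun x : ℝ => c1*x + c2*(x^2 - x₀*x)) m :=
    (hInt1.const_mul c1).add (ic2.const_mul c2)
  have i1e : Integrable (fun x : ℝ => 1 - Real.exp (-(s*x))) m :=
    (integrable_const 1).sub hintexp
  have hnn : 0 ≤ ∫ x, ((1 - Real.exp (-(s*x))) - (c1*x + c2*(x^2 - x₀*x))) ∂m := by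
    refine integral_nonneg_of_ae ?_
    filter_upwards [hae] with x hx
    exact sub_nonneg.2 (pointwise x hx)
  have hIF : ∫ x, ((1 - Real.exp (-(s*x))) - (c1*x + c2*(x^2 - x₀*x))) ∂m
      = 1 - γ - c1*a := by
    rw [integral_sub i1e i2, integral_sub (integrable_const 1) hintexp,
      integral_add (hInt1.const_mul c1) (ic2.const_mul c2),
      integral_const_mul, integral_const_mul,
      integral_sub hInt2 (hInt1.const_mul x₀), integral_const_mul, ha, hb, ← hγint,
      integral_const]
    simp only [probReal_univ, measure_univ, ENNReal.toReal_one, smul_eq_mul, one_mul, mul_one]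
    rw [hx₀a]
    ring
  rw [hIF] at hnn
  -- γ ≤ 1 - (a²/b)(1-E)
  have hub : γ ≤ 1 - a^2/b * (1 - E) := by
    have hc1a : c1 * a = a^2/b * (1 - E) := by
      rw [hc1_def, hx₀_def]; field_simp
    linarith
  -- Now compare with w = 1 + (a²/b)(ℓ-1)
  by_contra hcon
  push_neg at hcon
  have hr : 0 < a^2/b := by positivity
  set r : ℝ := a^2/b with hr_def
  set w : ℝ := 1 + r * (ℓ - 1) with hw_def
  clear_value r w
  have hwcon : w < γ := hcon
  have h1wr : 1 - w = r * (1 - ℓ) := by rw [hw_def]; ring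
  have h1w : 0 < 1 - w := by rw [h1wr]; exact mul_pos hr (by linarith)
  have hσ : 0 < (1-γ)/(1-w) := div_pos (by linarith) h1w
  have hτ : 0 < (γ-w)/(1-w) := div_pos (by linarith) h1w
  have hστ : (1-γ)/(1-w) + (γ-w)/(1-w) = 1 := by
    rw [← add_div, div_eq_one_iff_eq (ne_of_gt h1w)]; ring
  have hbamu : 0 < b/a * mu := mul_pos (div_pos hbpos ha0) hmu0
  have hpne : -(b/a*mu*(1-w)) ≠ (0:ℝ) := by
    have hpp : 0 < b/a*mu*(1-w) := mul_pos hbamu h1w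
    intro hzero
    rw [neg_eq_zero] at hzero
    rw [hzero] at hpp
    exact lt_irrefl 0 hpp
  have hconv := strictConvexOn_exp.2 (Set.mem_univ (-(b/a*mu*(1-w))))
      (Set.mem_univ (0:ℝ)) hpne hσ hτ hστ
  simp only [smul_eq_mul, mul_zero, add_zero, Real.exp_zero, mul_one] at hconv
  have harg : (1-γ)/(1-w) * (-(b/a*mu*(1-w))) = -(s*x₀) := by
    rw [hs_def, hx₀_def]
    field_simp
  rw [harg] at hconv
  have hexpw : Real.exp (-(b/a*mu*(1-w))) = ℓ := by
    have harg2 : -(b/a*mu*(1-w)) = -(a*mu) + a*mu*ℓ := by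
      rw [h1wr, hr_def]; field_simp; ring
    rw [harg2, ← hℓeq]
  rw [hexpw, ← hE_def] at hconv
  -- hconv : E < σ*ℓ + τ
  have hkey : r * ((1-γ)/(1-w)) * (1 - ℓ) = 1 - γ := by
    calc r * ((1-γ)/(1-w)) * (1 - ℓ) = (1-γ) * (r*(1-ℓ)) / (1-w) := by ring
    _ = (1-γ) * (1-w) / (1-w) := by rw [← h1wr]
    _ = 1-γ := by field_simp
  -- From hconv: 1 - E > σ*(1-ℓ)  (using hστ), then multiply by r
  have h5 : (1-γ)/(1-w) * (1 - ℓ) < 1 - E := by linarith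
  have h6 : r * ((1-γ)/(1-w)) * (1 - ℓ) < r * (1 - E) := by
    have := mul_lt_mul_of_pos_left h5 hr
    linarith [this]
  rw [hkey] at h6
  -- hub : γ ≤ 1 - r*(1-E)
  have : γ < γ := by
    have : r * (1 - E) ≤ 1 - γ := by linarith [hub]
    linarith
  exact lt_irrefl _ this
end
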